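/- arXiv:1603.04451 — 6 statements merged into one kernel-verified Lean document; each statement's English description precedes it below -/
import Mathlib

section
/- If the quadratic cost matrix Q of the QMST on a graph G is row graded (each row nondecreasing: q(i,1) ≤ q(i,2) ≤ ... ≤ q(i,m)), and if the lexicographically smallest spanning tree T⁰ (with respect to edge indices) is a minimum spanning tree of G with respect to the linear edge costs z_i := Σ_{e_j ∈ T⁰} q(i,j), then T⁰ minimizes the quadratic objective z(T) = Σ_{e_i∈T} Σ_{e_j∈T} q(i,j) over all spanning trees T of G. -/
set_option linter.unusedSectionVars false

/-- A spanning tree of the multigraph on vertex set `V` with edges `e_1,…,e_m` given by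
`ends : Fin m → Sym2 V`. -/
def IsSpanningTree {V : Type*} [Fintype V] {m : ℕ} (ends : Fin m → Sym2 V)
    (T : Finset (Fin m)) : Prop :=
  T.card + 1 = Fintype.card V ∧
    ∀ u v : V, Relation.ReflTransGen (fun a b => ∃ e ∈ T, ends e = s(a, b)) u v

section QMST

variable {V : Type*} [Fintype V] {m : ℕ} (ends : Fin m → Sym2 V)

def qRel (S : Finset (Fin m)) : V → V → Prop :=
  Relation.ReflTransGen (fun a b => ∃ e ∈ S, ends e = s(a, b))

lemma qRel_symm {S} {a b : V} (h : qRel ends S a b) : qRel ends S b a := by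
  refine (@Relation.ReflTransGen.stdSymm _ _ ⟨?_⟩).symm _ _ h
  rintro x y ⟨e, he, hxy⟩
  exact ⟨e, he, by rw [hxy, Sym2.eq_swap]⟩

def qSetoid (S : Finset (Fin m)) : Setoid V :=
  ⟨qRel ends S, ⟨fun _ => Relation.ReflTransGen.refl, qRel_symm ends,
    Relation.ReflTransGen.trans⟩⟩

noncomputable instance qQuotFintype (S : Finset (Fin m)) :
    Fintype (Quotient (qSetoid ends S)) := Fintype.ofFinite _

noncomputable def qComps (S : Finset (Fin m)) : ℕ :=
  Fintype.card (Quotient (qSetoid ends S))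

lemma qRel_mono {S S' : Finset (Fin m)} (h : S ⊆ S') {a b : V}
    (hab : qRel ends S a b) : qRel ends S' a b :=
  Relation.ReflTransGen.mono (fun _ _ ⟨e, he, hx⟩ => ⟨e, h he, hx⟩) _ _ hab

lemma qRel_single {S : Finset (Fin m)} {e : Fin m} (he : e ∈ S) {u v : V}
    (h : ends e = s(u, v)) : qRel ends S u v :=
  Relation.ReflTransGen.single ⟨e, he, h⟩

lemma qComps_le_of_rel_le {S S' : Finset (Fin m)}
    (h : ∀ a b : V, qRel ends S a b → qRel ends S' a b) :
    qComps ends S' ≤ qComps ends S := by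
  apply Fintype.card_le_of_surjective (Quotient.map' id (fun a b hab => h a b hab))
  intro x
  obtain ⟨a, rfl⟩ := Quotient.exists_rep x
  exact ⟨Quotient.mk'' a, rfl⟩

lemma qComps_mono {S S' : Finset (Fin m)} (h : S ⊆ S') :
    qComps ends S' ≤ qComps ends S :=
  qComps_le_of_rel_le ends fun _ _ => qRel_mono ends h

/-- analysing paths using one extra edge -/
lemma qRel_insert_cases {S : Finset (Fin m)} {e : Fin m} {u v : V}
    (hends : ends e = s(u, v)) {a b : V} (h : qRel ends (insert e S) a b) :
    qRel ends S a b ∨ (qRel ends S a u ∧ qRel ends S v b) ∨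
      (qRel ends S a v ∧ qRel ends S u b) := by
  induction h with
  | refl => exact Or.inl Relation.ReflTransGen.refl
  | @tail c d hac hstep ih =>
    obtain ⟨f, hf, hends'⟩ := hstep
    rcases Finset.mem_insert.mp hf with rfl | hfS
    · -- the step uses edge e
      rw [hends] at hends'
      rcases Sym2.eq_iff.mp hends'.symm with ⟨rfl, rfl⟩ | ⟨rfl, rfl⟩
      · -- c = u, d = v
        rcases ih with h1 | ⟨h1, _⟩ | ⟨h1, _⟩
        · exact Or.inr (Or.inl ⟨h1, Relation.ReflTransGen.refl⟩)
        · exact Or.inr (Or.inl ⟨h1, Relation.ReflTransGen.refl⟩)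
        · exact Or.inl h1
      · -- c = v, d = u
        rcases ih with h1 | ⟨h1, _⟩ | ⟨h1, _⟩
        · exact Or.inr (Or.inr ⟨h1, Relation.ReflTransGen.refl⟩)
        · exact Or.inl h1
        · exact Or.inr (Or.inr ⟨h1, Relation.ReflTransGen.refl⟩)
    · -- ordinary step inside S
      have hstepS : qRel ends S c d := qRel_single ends hfS hends'
      rcases ih with h1 | ⟨h1, h2⟩ | ⟨h1, h2⟩
      · exact Or.inl (h1.trans hstepS)
      · exact Or.inr (Or.inl ⟨h1, h2.trans hstepS⟩)
      · exact Or.inr (Or.inr ⟨h1, h2.trans hstepS⟩)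

open Classical in
lemma qComps_le_insert (S : Finset (Fin m)) (e : Fin m) :
    qComps ends S ≤ qComps ends (insert e S) + 1 := by
  obtain ⟨⟨u, v⟩, hends⟩ := Quot.exists_rep (ends e)
  have hends : ends e = s(u, v) := hends.symm
  set I := insert e S with hI
  let π : Quotient (qSetoid ends S) → Quotient (qSetoid ends I) :=
    Quotient.map' id (fun a b hab => qRel_mono ends (Finset.subset_insert e S) hab)
  let g : Quotient (qSetoid ends S) → Quotient (qSetoid ends I) ⊕ Unit :=
    fun x => if x = Quotient.mk (qSetoid ends S) u then Sum.inr () else Sum.inl (π x)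
  have hginj : Function.Injective g := by
    intro x y hxy
    by_cases hx : x = Quotient.mk (qSetoid ends S) u <;>
      by_cases hy : y = Quotient.mk (qSetoid ends S) u
    · exact hx.trans hy.symm
    · simp only [g, if_pos hx, if_neg hy] at hxy; exact absurd hxy (by simp)
    · simp only [g, if_pos hy, if_neg hx] at hxy; exact absurd hxy (by simp)
    · simp only [g, if_neg hx, if_neg hy, Sum.inl.injEq] at hxy
      obtain ⟨a, rfl⟩ := Quotient.exists_rep x
      obtain ⟨b, rfl⟩ := Quotient.exists_rep y
      have hab : qRel ends I a b := Quotient.exact' hxy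
      rcases qRel_insert_cases ends hends hab with h | ⟨h1, _⟩ | ⟨_, h2⟩
      · exact Quotient.sound h
      · exact absurd (Quotient.sound h1) hx
      · exact absurd (Quotient.sound (qRel_symm ends h2)) hy
  calc qComps ends S ≤ Fintype.card (Quotient (qSetoid ends I) ⊕ Unit) :=
        Fintype.card_le_of_injective g hginj
    _ = qComps ends I + 1 := by simp [qComps]

lemma qComps_insert_lt {S : Finset (Fin m)} {e : Fin m} {u v : V}
    (hends : ends e = s(u, v)) (huv : ¬ qRel ends S u v) :
    qComps ends (insert e S) < qComps ends S := by
  set I := insert e S with hI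
  let π : Quotient (qSetoid ends S) → Quotient (qSetoid ends I) :=
    Quotient.map' id (fun a b hab => qRel_mono ends (Finset.subset_insert e S) hab)
  apply Fintype.card_lt_of_surjective_not_injective π
  · intro x
    obtain ⟨a, rfl⟩ := Quotient.exists_rep x
    exact ⟨Quotient.mk _ a, rfl⟩
  · intro hinj
    apply huv
    have : π (Quotient.mk _ u) = π (Quotient.mk _ v) :=
      Quotient.sound (qRel_single ends (Finset.mem_insert_self e S) hends)
    exact Quotient.exact (hinj this)

lemma qComps_empty : qComps ends (∅ : Finset (Fin m)) = Fintype.card V := by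
  refine Fintype.card_congr ⟨Quotient.lift id ?_, fun v => Quotient.mk _ v, ?_, ?_⟩
  · intro a b hab
    induction hab with
    | refl => rfl
    | tail _ hstep ih => obtain ⟨f, hf, _⟩ := hstep; simp at hf
  · intro x; obtain ⟨a, rfl⟩ := Quotient.exists_rep x; rfl
  · intro v; rfl

lemma card_V_le_qComps_add (S : Finset (Fin m)) :
    Fintype.card V ≤ qComps ends S + S.card := by
  induction S using Finset.induction with
  | empty => simp [qComps_empty]
  | @insert e S heS ih =>
    calc Fintype.card V ≤ qComps ends S + S.card := ih
      _ ≤ (qComps ends (insert e S) + 1) + S.card :=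
          Nat.add_le_add_right (qComps_le_insert ends S e) _
      _ = qComps ends (insert e S) + (insert e S).card := by
          rw [Finset.card_insert_of_notMem heS]; ring

lemma qComps_le_union_add (B D : Finset (Fin m)) :
    qComps ends B ≤ qComps ends (B ∪ D) + D.card := by
  induction D using Finset.induction with
  | empty => simp
  | @insert e D heD ih =>
    calc qComps ends B ≤ qComps ends (B ∪ D) + D.card := ih
      _ ≤ (qComps ends (insert e (B ∪ D)) + 1) + D.card :=
          Nat.add_le_add_right (qComps_le_insert ends _ e) _
      _ = qComps ends (B ∪ insert e D) + (insert e D).card := by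
          rw [Finset.card_insert_of_notMem heD, Finset.union_insert]; ring
lemma qRel_le_of_edges {S S' : Finset (Fin m)}
    (h : ∀ e ∈ S', ∀ u v : V, ends e = s(u, v) → qRel ends S u v)
    {a b : V} (hab : qRel ends S' a b) : qRel ends S a b := by
  induction hab with
  | refl => exact Relation.ReflTransGen.refl
  | @tail c d _ hstep ih =>
    obtain ⟨f, hf, hends⟩ := hstep
    exact ih.trans (h f hf c d hends)

def IsSpanningTree' {V : Type*} [Fintype V] {m : ℕ} (ends : Fin m → Sym2 V)
    (T : Finset (Fin m)) : Prop :=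
  T.card + 1 = Fintype.card V ∧ ∀ u v : V, qRel ends T u v

lemma qComps_spanning {T : Finset (Fin m)} (hT : IsSpanningTree' ends T) :
    qComps ends T = 1 := by
  have hV : 0 < Fintype.card V := by have := hT.1; omega
  obtain ⟨v₀⟩ := Fintype.card_pos_iff.mp hV
  rw [qComps, Fintype.card_eq_one_iff]
  refine ⟨Quotient.mk _ v₀, fun y => ?_⟩
  obtain ⟨a, rfl⟩ := Quotient.exists_rep y
  exact Quotient.sound (hT.2 a v₀)

/-- subsets of spanning trees are "forests": comps + card = |V| -/
lemma forest_of_subset {T B : Finset (Fin m)} (hT : IsSpanningTree' ends T)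
    (hB : B ⊆ T) : qComps ends B + B.card = Fintype.card V := by
  have h1 := card_V_le_qComps_add ends B
  have h2 : qComps ends B ≤ qComps ends (B ∪ (T \ B)) + (T \ B).card :=
    qComps_le_union_add ends B (T \ B)
  rw [Finset.union_sdiff_of_subset hB] at h2
  have h3 : (T \ B).card = T.card - B.card := Finset.card_sdiff_of_subset hB
  have h4 : B.card ≤ T.card := Finset.card_le_card hB
  have h5 := qComps_spanning ends hT
  have h6 := hT.1
  omega

/-- matroid augmentation -/
lemma qAugment {A B : Finset (Fin m)}
    (hA : qComps ends A + A.card = Fintype.card V)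
    (hB : qComps ends B + B.card = Fintype.card V)
    (hcard : A.card < B.card) :
    ∃ e ∈ B, e ∉ A ∧ qComps ends (insert e A) + (insert e A).card = Fintype.card V := by
  by_cases hall : ∀ e ∈ B, ∀ u v : V, ends e = s(u, v) → qRel ends A u v
  · have := qComps_le_of_rel_le ends (S := B) (S' := A)
      (fun a b hab => qRel_le_of_edges ends hall hab)
    omega
  · push_neg at hall
    obtain ⟨e, heB, u, v, hends, huv⟩ := hall
    have heA : e ∉ A := fun h => huv (qRel_single ends h hends)
    have hlt := qComps_insert_lt ends hends huv
    have hge := card_V_le_qComps_add ends (insert e A)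
    rw [Finset.card_insert_of_notMem heA] at hge
    exact ⟨e, heB, heA, by rw [Finset.card_insert_of_notMem heA]; omega⟩

/-- extend a forest to a spanning tree, using edges of an existing spanning tree -/
lemma qExtend {T0 : Finset (Fin m)} (hT0 : IsSpanningTree' ends T0) :
    ∀ k (S : Finset (Fin m)), qComps ends S = k →
      qComps ends S + S.card = Fintype.card V →
      ∃ T', S ⊆ T' ∧ IsSpanningTree' ends T' := by
  intro k
  induction k using Nat.strong_induction_on with
  | _ k ih =>
    intro S hk hS
    have hV : 0 < Fintype.card V := by have := hT0.1; omega
    have hc1 : 1 ≤ qComps ends S := by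
      rw [qComps, Nat.one_le_iff_ne_zero, ← Nat.pos_iff_ne_zero, Fintype.card_pos_iff]
      obtain ⟨v₀⟩ := Fintype.card_pos_iff.mp hV
      exact ⟨Quotient.mk _ v₀⟩
    rcases eq_or_lt_of_le hc1 with hone | hmore
    · -- S is already spanning
      refine ⟨S, Finset.Subset.refl S, by omega, fun a b => ?_⟩
      have : (Quotient.mk (qSetoid ends S) a) = Quotient.mk _ b := by
        have := Fintype.card_le_one_iff.mp (le_of_eq hone.symm)
        exact this _ _
      exact Quotient.exact' this
    · -- find an edge of T0 joining two components
      have hex : ∃ e ∈ T0, ∃ u v : V, ends e = s(u, v) ∧ ¬ qRel ends S u v := by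
        by_contra hall
        push_neg at hall
        have hle := qComps_le_of_rel_le ends (S := T0) (S' := S)
          (fun a b hab => qRel_le_of_edges ends
            (fun e he u v h => hall e he u v h) hab)
        have := qComps_spanning ends hT0
        omega
      obtain ⟨e, _, u, v, hends, huv⟩ := hex
      have heS : e ∉ S := fun h => huv (qRel_single ends h hends)
      have hlt := qComps_insert_lt ends hends huv
      have hge := card_V_le_qComps_add ends (insert e S)
      rw [Finset.card_insert_of_notMem heS] at hge
      have hinv : qComps ends (insert e S) + (insert e S).card = Fintype.card V := by
        rw [Finset.card_insert_of_notMem heS]; omega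
      obtain ⟨T', hsub, hT'⟩ := ih (qComps ends (insert e S)) (by omega) _ rfl hinv
      exact ⟨T', (Finset.subset_insert e S).trans hsub, hT'⟩

lemma lex_of_sorted_min_diff {α : Type*} [LinearOrder α] :
    ∀ (l2 l1 : List α), l1.Pairwise (· < ·) → l2.Pairwise (· < ·) →
      l1.length ≤ l2.length →
      ∀ c, c ∈ l1 → c ∉ l2 → (∀ x, x < c → (x ∈ l1 ↔ x ∈ l2)) →
      List.Lex (· < ·) l1 l2 := by
  intro l2
  induction l2 with
  | nil =>
    intro l1 _ _ hlen c hc _ _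
    rw [List.length_nil, Nat.le_zero, List.length_eq_zero_iff] at hlen
    subst hlen; simp at hc
  | cons b t2 ih =>
    intro l1 h1 h2 hlen c hc hc2 hmin
    cases l1 with
    | nil => simp at hc
    | cons a t1 =>
      rcases lt_trichotomy a b with hab | hab | hab
      · exact List.Lex.rel hab
      · rw [hab]
        refine List.Lex.cons (ih t1 h1.of_cons h2.of_cons (by simpa using hlen) c ?_ ?_ ?_)
        · rcases List.mem_cons.mp hc with h | h
          · exact absurd (by rw [h, hab]; exact List.mem_cons_self) hc2
          · exact h
        · exact fun h => hc2 (List.mem_cons_of_mem _ h)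
        · intro x hx
          constructor
          · intro hxt1
            have hax : a < x := List.rel_of_pairwise_cons h1 hxt1
            have hxbt2 : x ∈ b :: t2 := (hmin x hx).mp (List.mem_cons_of_mem _ hxt1)
            rcases List.mem_cons.mp hxbt2 with h | h
            · exact absurd hax (by rw [h, hab]; exact lt_irrefl b)
            · exact h
          · intro hxt2
            have hbx : b < x := List.rel_of_pairwise_cons h2 hxt2
            have hxat1 : x ∈ a :: t1 := (hmin x hx).mpr (List.mem_cons_of_mem _ hxt2)
            rcases List.mem_cons.mp hxat1 with h | h
            · exact absurd hbx (by rw [h, hab]; exact lt_irrefl b)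
            · exact h
      · -- b < a : impossible
        exfalso
        have hac : a ≤ c := by
          rcases List.mem_cons.mp hc with h | h
          · exact le_of_eq h.symm
          · exact le_of_lt (List.rel_of_pairwise_cons h1 h)
        have hbc : b < c := lt_of_lt_of_le hab hac
        have hb1 : b ∈ a :: t1 := (hmin b hbc).mpr (List.mem_cons_self)
        rcases List.mem_cons.mp hb1 with h | h
        · exact absurd (h ▸ hab) (lt_irrefl _)
        · exact absurd (List.rel_of_pairwise_cons h1 h) (lt_asymm hab)

lemma gale_dominance {T0 T : Finset (Fin m)} (hT0 : IsSpanningTree' ends T0)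
    (hT : IsSpanningTree' ends T)
    (hlex : ∀ T', IsSpanningTree' ends T' → T' = T0 ∨
      List.Lex (· < ·) (T0.sort (· ≤ ·)) (T'.sort (· ≤ ·)))
    {k : ℕ} (hk0 : k < (T0.sort (· ≤ ·)).length) (hk : k < (T.sort (· ≤ ·)).length) :
    (T0.sort (· ≤ ·))[k] ≤ (T.sort (· ≤ ·))[k] := by
  by_contra hcon
  push_neg at hcon
  set l0 := T0.sort (· ≤ ·) with hl0
  set l := T.sort (· ≤ ·) with hl
  have hl0nd : l0.Nodup := T0.sort_nodup _
  have hlnd : l.Nodup := T.sort_nodup _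
  have hl0s : l0.Pairwise (· < ·) := (Finset.sortedLT_sort T0).pairwise
  have hls : l.Pairwise (· < ·) := (Finset.sortedLT_sort T).pairwise
  set A : Finset (Fin m) := (l0.take k).toFinset with hA
  set B : Finset (Fin m) := (l.take (k + 1)).toFinset with hB
  have hAcard : A.card = k := by
    rw [hA, List.card_toFinset, (hl0nd.sublist (List.take_sublist _ _)).dedup,
      List.length_take]
    omega
  have hBcard : B.card = k + 1 := by
    rw [hB, List.card_toFinset, (hlnd.sublist (List.take_sublist _ _)).dedup,
      List.length_take]
    omega
  have hAsub : A ⊆ T0 := by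
    intro x hx
    rw [hA, List.mem_toFinset] at hx
    exact (Finset.mem_sort _).mp (List.take_subset _ _ hx)
  have hBsub : B ⊆ T := by
    intro x hx
    rw [hB, List.mem_toFinset] at hx
    exact (Finset.mem_sort _).mp (List.take_subset _ _ hx)
  have hAinv := forest_of_subset ends hT0 hAsub
  have hBinv := forest_of_subset ends hT hBsub
  obtain ⟨b', hb'B, hb'A, hinv⟩ := qAugment ends hAinv hBinv (by omega)
  -- every element of A is < l0[k]
  have hAlt : ∀ x ∈ A, x < l0[k] := by
    intro x hx
    rw [hA, List.mem_toFinset, List.mem_take_iff_getElem] at hx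
    obtain ⟨i, hi, rfl⟩ := hx
    have : i < k := by omega
    exact hl0s.rel_get_of_lt (a := ⟨i, by omega⟩) (b := ⟨k, hk0⟩) this
  -- b' ≤ l[k]
  have hb'le : b' ≤ l[k] := by
    rw [hB, List.mem_toFinset, List.mem_take_iff_getElem] at hb'B
    obtain ⟨i, hi, rfl⟩ := hb'B
    have hik : i ≤ k := by omega
    rcases lt_or_eq_of_le hik with h | h
    · exact le_of_lt (hls.rel_get_of_lt (a := ⟨i, by omega⟩) (b := ⟨k, hk⟩) h)
    · subst h; exact le_refl _
  have hb'lt : b' < l0[k] := lt_of_le_of_lt hb'le hcon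
  -- every element of T0 below l0[k] is in A
  have hT0cap : ∀ x ∈ T0, x < l0[k] → x ∈ A := by
    intro x hx hxlt
    have hxl0 : x ∈ l0 := (Finset.mem_sort _).mpr hx
    obtain ⟨i, hi, rfl⟩ := List.mem_iff_getElem.mp hxl0
    have hik : i < k := by
      by_contra hik
      push_neg at hik
      rcases lt_or_eq_of_le hik with h | h
      · exact absurd (hl0s.rel_get_of_lt (a := ⟨k, hk0⟩) (b := ⟨i, hi⟩) h)
          (lt_asymm hxlt)
      · subst h; exact absurd hxlt (lt_irrefl _)
    rw [hA, List.mem_toFinset, List.mem_take_iff_getElem]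
    exact ⟨i, by omega, rfl⟩
  have hb'T0 : b' ∉ T0 := fun h => hb'A (hT0cap b' h hb'lt)
  -- extend to a spanning tree
  obtain ⟨T', hsubT', hT'⟩ := qExtend ends hT0 _ (insert b' A) rfl hinv
  have hb'T' : b' ∈ T' := hsubT' (Finset.mem_insert_self _ _)
  have hAT' : A ⊆ T' := fun x hx => hsubT' (Finset.mem_insert_of_mem hx)
  -- the least element of T' \ T0
  have hne : (T' \ T0).Nonempty := ⟨b', Finset.mem_sdiff.mpr ⟨hb'T', hb'T0⟩⟩
  set c := (T' \ T0).min' hne with hc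
  have hcT' : c ∈ T' := (Finset.mem_sdiff.mp ((T' \ T0).min'_mem hne)).1
  have hcT0 : c ∉ T0 := (Finset.mem_sdiff.mp ((T' \ T0).min'_mem hne)).2
  have hcb' : c ≤ b' := Finset.min'_le _ _ (Finset.mem_sdiff.mpr ⟨hb'T', hb'T0⟩)
  have hlexlt : List.Lex (· < ·) (T'.sort (· ≤ ·)) l0 := by
    refine lex_of_sorted_min_diff l0 (T'.sort (· ≤ ·)) ((Finset.sortedLT_sort T').pairwise) hl0s ?_ c ?_ ?_ ?_
    · rw [hl0, Finset.length_sort, Finset.length_sort]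
      have h1 := hT'.1; have h2 := hT0.1; omega
    · exact (Finset.mem_sort _).mpr hcT'
    · rw [hl0, Finset.mem_sort]; exact hcT0
    · intro x hx
      rw [hl0, Finset.mem_sort, Finset.mem_sort]
      constructor
      · intro hxT'
        by_contra hxT0
        exact absurd hx (not_lt.mpr (Finset.min'_le _ _ (Finset.mem_sdiff.mpr ⟨hxT', hxT0⟩)))
      · intro hxT0
        exact hAT' (hT0cap x hxT0 (lt_of_lt_of_le (lt_of_lt_of_le hx hcb') (le_of_lt hb'lt)))
  rcases hlex T' hT' with rfl | hgt
  · exact hcT0 hcT'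
  · exact asymm hgt hlexlt

lemma sum_sort_map {S : Finset (Fin m)} (f : Fin m → ℝ) :
    ∑ j ∈ S, f j = ((S.sort (· ≤ ·)).map f).sum := by
  rw [← Finset.sum_map_toList]
  exact (List.Perm.sum_eq (List.Perm.map f (Finset.sort_perm_toList S _))).symm

lemma list_sum_le_pointwise (f : Fin m → ℝ) :
    ∀ (l1 l2 : List (Fin m)), l1.length = l2.length →
    (∀ i (h1 : i < l1.length) (h2 : i < l2.length), f l1[i] ≤ f l2[i]) →
    (l1.map f).sum ≤ (l2.map f).sum := by
  intro l1
  induction l1 with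
  | nil =>
    intro l2 hlen _
    rw [List.length_nil] at hlen
    rw [List.length_eq_zero_iff.mp hlen.symm]
  | cons a t1 ih =>
    intro l2 hlen hpt
    cases l2 with
    | nil => simp at hlen
    | cons b t2 =>
      simp only [List.map_cons, List.sum_cons]
      have h0 := hpt 0 (by simp) (by simp)
      simp only [List.getElem_cons_zero] at h0
      refine add_le_add h0 (ih t2 (by simpa using hlen) ?_)
      intro i hi1 hi2
      have := hpt (i + 1) (by simpa using hi1) (by simpa using hi2)
      simpa using this

end QMST

lemma isSpanningTree_iff' {V : Type*} [Fintype V] {m : ℕ} (ends : Fin m → Sym2 V)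
    (T : Finset (Fin m)) : IsSpanningTree ends T ↔ IsSpanningTree' ends T := Iff.rfl

/-- If the quadratic cost matrix `Q` is row graded, and the lexicographically smallest
spanning tree `T⁰` is a minimum spanning tree for the linear costs `z i = ∑_{j ∈ T⁰} q i j`,
then `T⁰` minimizes the quadratic objective `z(T) = ∑_{i∈T} ∑_{j∈T} q i j` over all
spanning trees. -/
theorem qmst_row_graded_lex_optimal {V : Type*} [Fintype V] {m : ℕ}
    (ends : Fin m → Sym2 V) (Q : Fin m → Fin m → ℝ)
    (hgrad : ∀ i, Monotone (Q i))
    (T0 : Finset (Fin m)) (hT0 : IsSpanningTree ends T0)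
    (hlex : ∀ T, IsSpanningTree ends T → T = T0 ∨
      List.Lex (· < ·) (T0.sort (· ≤ ·)) (T.sort (· ≤ ·)))
    (hmst : ∀ T, IsSpanningTree ends T →
      ∑ i ∈ T0, ∑ j ∈ T0, Q i j ≤ ∑ i ∈ T, ∑ j ∈ T0, Q i j) :
    ∀ T, IsSpanningTree ends T →
      ∑ i ∈ T0, ∑ j ∈ T0, Q i j ≤ ∑ i ∈ T, ∑ j ∈ T, Q i j := by
  intro T hT
  have hT0' : IsSpanningTree' ends T0 := (isSpanningTree_iff' ends T0).mp hT0
  have hT' : IsSpanningTree' ends T := (isSpanningTree_iff' ends T).mp hT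
  have hlex' : ∀ T', IsSpanningTree' ends T' → T' = T0 ∨
      List.Lex (· < ·) (T0.sort (· ≤ ·)) (T'.sort (· ≤ ·)) :=
    fun T' h => hlex T' ((isSpanningTree_iff' ends T').mpr h)
  calc ∑ i ∈ T0, ∑ j ∈ T0, Q i j ≤ ∑ i ∈ T, ∑ j ∈ T0, Q i j := hmst T hT
    _ ≤ ∑ i ∈ T, ∑ j ∈ T, Q i j := by
        apply Finset.sum_le_sum
        intro i _
        rw [sum_sort_map (Q i), sum_sort_map (Q i)]
        apply list_sum_le_pointwise (Q i)
        · rw [Finset.length_sort, Finset.length_sort]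
          have h1 := hT0'.1; have h2 := hT'.1; omega
        · intro k hk0 hk
          exact hgrad i (gale_dominance ends hT0' hT' hlex' hk0 hk)
end

section
/- Let (E, F) be the base system of a matroid and W a doubly graded m×m cost matrix (rows and columns nondecreasing in the index order). Then the lexicographically smallest base S⁰ minimizes the quadratic objective Π(S) = Σ_{i∈S} Σ_{j∈S} w(i,j) over all bases S ∈ F, and Π(S⁰) equals the natural lower bound min_{S∈F} Σ_{j∈S} f_j where f_i = min_{S∈F} Σ_{j∈S} w(i,j). -/
private lemma lex_helper {α : Type*} [LinearOrder α] (c : α) :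
    ∀ (l₁ l₂ : List α), l₁.Pairwise (· < ·) → l₂.Pairwise (· < ·) →
      c ∈ l₁ → c ∉ l₂ → (∀ x, x < c → (x ∈ l₁ ↔ x ∈ l₂)) →
      (∃ y ∈ l₂, c ≤ y) → List.Lex (· < ·) l₁ l₂ := by
  intro l₁
  induction l₁ with
  | nil => intro l₂ _ _ hc; exact absurd hc (List.not_mem_nil (a := c))
  | cons a t₁ ih =>
    intro l₂ h₁ h₂ hc hcn hag hy
    match l₂ with
    | [] => obtain ⟨y, hy, _⟩ := hy; exact absurd hy (List.not_mem_nil (a := y))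
    | b :: t₂ =>
      rcases lt_trichotomy a b with hab | hab | hab
      · exact List.Lex.rel hab
      · subst hab
        have hane : a ≠ c := fun h => hcn (h ▸ List.mem_cons_self (a := a) (l := t₂))
        have hct : c ∈ t₁ := by
          rcases List.mem_cons.mp hc with h | h
          · exact absurd h.symm hane
          · exact h
        have hac : a < c := (List.pairwise_cons.mp h₁).1 c hct
        apply List.Lex.cons
        apply ih t₂ (List.pairwise_cons.mp h₁).2 (List.pairwise_cons.mp h₂).2 hct
          (fun h => hcn (List.mem_cons_of_mem a h))
        · intro x hx
          constructor
          · intro hxt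
            have := (hag x hx).mp (List.mem_cons_of_mem a hxt)
            rcases List.mem_cons.mp this with h | h
            · exact absurd (h ▸ (List.pairwise_cons.mp h₁).1 x hxt) (lt_irrefl x)
            · exact h
          · intro hxt
            have := (hag x hx).mpr (List.mem_cons_of_mem a hxt)
            rcases List.mem_cons.mp this with h | h
            · exact absurd (h ▸ (List.pairwise_cons.mp h₂).1 x hxt) (lt_irrefl x)
            · exact h
        · obtain ⟨y, hyl, hcy⟩ := hy
          rcases List.mem_cons.mp hyl with h | h
          · rw [h] at hcy; exact absurd (lt_of_le_of_lt hcy hac) (lt_irrefl _)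
          · exact ⟨y, h, hcy⟩
      · -- b < a : contradiction
        exfalso
        by_cases hbc : b < c
        · have : b ∈ a :: t₁ := (hag b hbc).mpr (List.mem_cons_self (a := b) (l := t₂))
          rcases List.mem_cons.mp this with h | h
          · exact absurd (h ▸ hab) (lt_irrefl b)
          · exact absurd (lt_trans hab ((List.pairwise_cons.mp h₁).1 b h)) (lt_irrefl b)
        · have hcb : c ≤ b := le_of_not_gt hbc
          have hcb' : c < b := lt_of_le_of_ne hcb (fun h => hcn (h ▸ List.mem_cons_self (a := b) (l := t₂)))
          have hac : a ≤ c := by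
            rcases List.mem_cons.mp hc with h | h
            · exact le_of_eq h.symm
            · exact le_of_lt ((List.pairwise_cons.mp h₁).1 c h)
          exact absurd (lt_of_le_of_lt hac (lt_trans hcb' hab)) (lt_irrefl a)

/-- Replacing `d ∈ B` by a fresh smaller element `c` yields a lexicographically
smaller sorted list. -/
private lemma lex_exchange {m : ℕ} {B : Finset (Fin m)} {c d : Fin m}
    (hd : d ∈ B) (hc : c ∉ B) (hcd : c < d) :
    List.Lex (· < ·) ((insert c (B.erase d)).sort (· ≤ ·)) (B.sort (· ≤ ·)) := by
  apply lex_helper c _ _ (Finset.sortedLT_sort _).pairwise (Finset.sortedLT_sort _).pairwise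
  · rw [Finset.mem_sort]; exact Finset.mem_insert_self c _
  · rw [Finset.mem_sort]; exact hc
  · intro x hx
    rw [Finset.mem_sort, Finset.mem_sort, Finset.mem_insert, Finset.mem_erase]
    constructor
    · rintro (rfl | ⟨-, h⟩)
      · exact absurd hx (lt_irrefl x)
      · exact h
    · intro h
      exact Or.inr ⟨fun he => absurd (he ▸ hx) (lt_asymm hcd ∘ id), h⟩
  · exact ⟨d, (Finset.mem_sort _).mpr hd, le_of_lt hcd⟩

/-- If `(E, F)` is the base system of a matroid (nonempty family of equal-cardinality bases
with the exchange property) and `W` is doubly graded, then the lexicographically smallest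
base `S⁰` minimizes the quadratic objective `Π(S) = ∑_{i∈S} ∑_{j∈S} w i j`, and `Π(S⁰)`
equals the natural lower bound `min_S ∑_{j∈S} f j` with `f i = min_S ∑_{j∈S} w i j`. -/
theorem matroid_doubly_graded_lex_base_optimal (m s : ℕ)
    (F : Set (Finset (Fin m))) (hne : F.Nonempty)
    (hcard : ∀ S ∈ F, S.card = s)
    (hex : ∀ S₁ ∈ F, ∀ S₂ ∈ F, ∀ i ∈ S₁ \ S₂, ∃ j ∈ S₂ \ S₁, insert j (S₁.erase i) ∈ F)
    (W : Fin m → Fin m → ℝ)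
    (hrow : ∀ i, Monotone (W i))
    (hcol : ∀ j, Monotone (fun i => W i j))
    (S0 : Finset (Fin m)) (hS0 : S0 ∈ F)
    (hlex : ∀ S ∈ F, S = S0 ∨
      List.Lex (· < ·) (S0.sort (· ≤ ·)) (S.sort (· ≤ ·))) :
    (∀ S ∈ F, ∑ i ∈ S0, ∑ j ∈ S0, W i j ≤ ∑ i ∈ S, ∑ j ∈ S, W i j) ∧
    ∑ i ∈ S0, ∑ j ∈ S0, W i j =
      sInf {x : ℝ | ∃ S ∈ F, x = ∑ j ∈ S, sInf {y : ℝ | ∃ S' ∈ F, y = ∑ k ∈ S', W j k}} := by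
  -- no exchange of S0 with a smaller fresh element stays in F
  have hno : ∀ (j : Fin m), j ∈ S0 → ∀ (c : Fin m), c ∉ S0 → c < j →
      insert c (S0.erase j) ∉ F := by
    intro j hj c hcS hcj hmem
    have hne' : insert c (S0.erase j) ≠ S0 := by
      intro h
      exact hcS (h ▸ Finset.mem_insert_self c _)
    rcases hlex _ hmem with h | h
    · exact hne' h
    · exact (List.Lex.asymm (· < ·)).asymm _ _ h (lex_exchange hj hcS hcj)
  -- key lemma: S0 minimizes any monotone linear objective
  have key : ∀ (g : Fin m → ℝ), Monotone g → ∀ S ∈ F,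
      ∑ j ∈ S0, g j ≤ ∑ j ∈ S, g j := by
    intro g hg
    have main : ∀ n : ℕ, ∀ S ∈ F, (S \ S0).card = n → ∑ j ∈ S0, g j ≤ ∑ j ∈ S, g j := by
      intro n
      induction n using Nat.strong_induction_on with
      | _ n ih =>
        intro S hS hn
        rcases Nat.eq_zero_or_pos n with rfl | hpos
        · have hsub : S ⊆ S0 := by
            rw [← Finset.sdiff_eq_empty_iff_subset]
            exact Finset.card_eq_zero.mp hn
          have : S = S0 := Finset.eq_of_subset_of_card_le hsub
            (by rw [hcard S hS, hcard S0 hS0])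
          rw [this]
        · have hnem : (S \ S0).Nonempty := Finset.card_pos.mp (hn ▸ hpos)
          set i := (S \ S0).max' hnem with hi
          have hiS : i ∈ S \ S0 := (S \ S0).max'_mem hnem
          obtain ⟨j, hj, hS'⟩ := hex S hS S0 hS0 i hiS
          rw [Finset.mem_sdiff] at hiS hj
          have hjiS : j ∉ S.erase i := fun h => hj.2 (Finset.mem_of_mem_erase h)
          have hcard' : ((insert j (S.erase i)) \ S0).card = n - 1 := by
            have h1 : (insert j (S.erase i)) \ S0 = (S \ S0).erase i := by
              ext x
              simp only [Finset.mem_sdiff, Finset.mem_insert, Finset.mem_erase]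
              constructor
              · rintro ⟨rfl | ⟨hxi, hxS⟩, hxS0⟩
                · exact absurd hj.1 hxS0
                · exact ⟨hxi, hxS, hxS0⟩
              · rintro ⟨hxi, hxS, hxS0⟩
                exact ⟨Or.inr ⟨hxi, hxS⟩, hxS0⟩
            rw [h1, Finset.card_erase_of_mem (Finset.mem_sdiff.mpr hiS), hn]
          have hsum : ∑ x ∈ insert j (S.erase i), g x = g j + (∑ x ∈ S, g x - g i) := by
            rw [Finset.sum_insert hjiS, Finset.sum_erase_eq_sub hiS.1]
          by_cases hgji : g j ≤ g i
          · have h1 := ih (n - 1) (Nat.sub_lt hpos one_pos) _ hS' hcard'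
            rw [hsum] at h1
            linarith
          · -- g i < g j hence i < j; derive contradiction via lex minimality
            exfalso
            have hij : i < j := by
              by_contra h
              exact hgji (hg (le_of_not_gt h))
            obtain ⟨c, hc, hS0'⟩ := hex S0 hS0 S hS j (Finset.mem_sdiff.mpr ⟨hj.1, hj.2⟩)
            rw [Finset.mem_sdiff] at hc
            have hci : c ≤ i := Finset.le_max' _ c (Finset.mem_sdiff.mpr hc)
            exact hno j hj.1 c hc.2 (lt_of_le_of_lt hci hij) hS0'
    intro S hS
    exact main _ S hS rfl
  -- inner sInf computation
  have hinner : ∀ i : Fin m,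
      sInf {y : ℝ | ∃ S' ∈ F, y = ∑ k ∈ S', W i k} = ∑ k ∈ S0, W i k := by
    intro i
    have hlb : ∀ y ∈ {y : ℝ | ∃ S' ∈ F, y = ∑ k ∈ S', W i k}, ∑ k ∈ S0, W i k ≤ y := by
      rintro y ⟨S', hS', rfl⟩
      exact key (W i) (hrow i) S' hS'
    have hmem : (∑ k ∈ S0, W i k) ∈ {y : ℝ | ∃ S' ∈ F, y = ∑ k ∈ S', W i k} :=
      ⟨S0, hS0, rfl⟩
    exact le_antisymm (csInf_le ⟨_, hlb⟩ hmem) (le_csInf ⟨_, hmem⟩ hlb)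
  constructor
  · intro S hS
    have h1 : ∑ i ∈ S0, ∑ j ∈ S0, W i j ≤ ∑ i ∈ S, ∑ j ∈ S0, W i j := by
      apply key (fun i => ∑ j ∈ S0, W i j) _ S hS
      intro a b hab
      exact Finset.sum_le_sum (fun j _ => hcol j hab)
    have h2 : ∑ i ∈ S, ∑ j ∈ S0, W i j ≤ ∑ i ∈ S, ∑ j ∈ S, W i j :=
      Finset.sum_le_sum (fun i _ => key (W i) (hrow i) S hS)
    linarith
  · have hset : {x : ℝ | ∃ S ∈ F, x = ∑ j ∈ S, sInf {y : ℝ | ∃ S' ∈ F, y = ∑ k ∈ S', W j k}}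
        = {x : ℝ | ∃ S ∈ F, x = ∑ j ∈ S, ∑ k ∈ S0, W j k} := by
      ext x
      simp only [Set.mem_setOf_eq]
      constructor <;> rintro ⟨S, hS, rfl⟩ <;> exact ⟨S, hS, by
        apply Finset.sum_congr rfl; intro j _; rw [hinner j]⟩
    rw [hset]
    have hf : Monotone (fun j => ∑ k ∈ S0, W j k) := by
      intro a b hab
      exact Finset.sum_le_sum (fun k _ => hcol k hab)
    have hlb : ∀ y ∈ {x : ℝ | ∃ S ∈ F, x = ∑ j ∈ S, ∑ k ∈ S0, W j k},
        ∑ i ∈ S0, ∑ j ∈ S0, W i j ≤ y := by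
      rintro y ⟨S, hS, rfl⟩
      exact key _ hf S hS
    have hmem : (∑ i ∈ S0, ∑ j ∈ S0, W i j) ∈
        {x : ℝ | ∃ S ∈ F, x = ∑ j ∈ S, ∑ k ∈ S0, W j k} := ⟨S0, hS0, rfl⟩
    exact le_antisymm (le_csInf ⟨_, hmem⟩ hlb) (csInf_le ⟨_, hlb⟩ hmem)
end

section
/- Let (E, F) be a base system (all bases of equal cardinality) that is not a matroid, i.e., there exist bases S₁, S₂ and K ∈ S₁∖S₂ such that S₁∖{K} ∪ {i} is not a base for every i ∈ S₂∖S₁. Then there exists a permutation π of E and a permuted doubly graded 0-1 cost matrix W such that the π-critical (lexicographically smallest under π) base is not optimal for the quadratic minimum weight base problem with cost matrix W. -/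
/-- Helper: if sorted (strictly increasing) lists of equal length are in strict
lexicographic order, then the first list contains an element not in the second that is
smaller than every element of the second not in the first. -/
lemma lex_min_diff_aux {α : Type*} [LinearOrder α] :
    ∀ {l0 l1 : List α}, List.Lex (· < ·) l0 l1 →
    l0.Pairwise (· < ·) → l1.Pairwise (· < ·) → l0.length = l1.length →
    ∃ d, d ∈ l0 ∧ d ∉ l1 ∧ ∀ e ∈ l1, e ∉ l0 → d < e := by
  intro l0 l1 h
  induction h with
  | nil => intro _ _ hlen; simp at hlen
  | @cons a l0' l1' h ih =>
    intro h0 h1 hlen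
    obtain ⟨d, hd0, hd1, hmin⟩ := ih (List.pairwise_cons.mp h0).2 (List.pairwise_cons.mp h1).2
      (by simpa using hlen)
    have had : a < d := (List.pairwise_cons.mp h0).1 d hd0
    refine ⟨d, List.mem_cons_of_mem _ hd0, ?_, ?_⟩
    · intro hmem
      rcases List.mem_cons.mp hmem with rfl | hmem
      · exact lt_irrefl d had
      · exact hd1 hmem
    · intro e he hne
      rcases List.mem_cons.mp he with rfl | he
      · exact absurd (List.mem_cons_self) hne
      · exact hmin e he (fun hc => hne (List.mem_cons_of_mem _ hc))
  | @rel a l0' b l1' hab =>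
    intro h0 h1 hlen
    refine ⟨a, List.mem_cons_self, ?_, ?_⟩
    · intro hmem
      rcases List.mem_cons.mp hmem with rfl | hmem
      · exact lt_irrefl a hab
      · exact lt_irrefl a (hab.trans ((List.pairwise_cons.mp h1).1 a hmem))
    · intro e he _
      rcases List.mem_cons.mp he with rfl | he
      · exact hab
      · exact hab.trans ((List.pairwise_cons.mp h1).1 e he)

/-- If a base system `(E, F)` (all bases of equal cardinality) fails the matroid base
exchange property — witnessed by bases `S₁, S₂` and `K ∈ S₁ \ S₂` with
`S₁ \ {K} ∪ {i} ∉ F` for all `i ∈ S₂ \ S₁` — then there is a permutation `π` of `E` and a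
0-1 cost matrix `W` that is permuted doubly graded via `π`, such that the `π`-critical
(lexicographically smallest under `π`) base is not optimal for the quadratic minimum
weight base problem with cost matrix `W`. -/
theorem non_matroid_has_bad_permuted_doubly_graded_instance (m s : ℕ)
    (F : Set (Finset (Fin m)))
    (hcard : ∀ S ∈ F, S.card = s)
    (S₁ S₂ : Finset (Fin m)) (h₁ : S₁ ∈ F) (h₂ : S₂ ∈ F)
    (K : Fin m) (hK : K ∈ S₁ \ S₂)
    (hfail : ∀ i ∈ S₂ \ S₁, insert i (S₁.erase K) ∉ F) :
    ∃ (π : Equiv.Perm (Fin m)) (W : Fin m → Fin m → ℝ),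
      (∀ i j, W i j = 0 ∨ W i j = 1) ∧
      (∀ i, Monotone (fun j => W (π.symm i) (π.symm j))) ∧
      (∀ j, Monotone (fun i => W (π.symm i) (π.symm j))) ∧
      ∀ S0 ∈ F,
        (∀ S ∈ F, S = S0 ∨
          List.Lex (· < ·) ((S0.image π).sort (· ≤ ·)) ((S.image π).sort (· ≤ ·))) →
        ∃ S ∈ F, ∑ i ∈ S, ∑ j ∈ S, W i j < ∑ i ∈ S0, ∑ j ∈ S0, W i j := by
  classical
  obtain ⟨hK1, hK2⟩ := Finset.mem_sdiff.mp hK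
  set A : Finset (Fin m) := S₁.erase K with hA
  set B : Finset (Fin m) := S₂ \ S₁ with hB
  have hKA : K ∉ A := Finset.notMem_erase _ _
  have hKB : K ∉ B := fun h => hK2 (Finset.mem_sdiff.mp h).1
  set rank : Fin m → ℕ := fun x => if x ∈ A then 0 else if x ∈ B then 1 else if x = K then 2 else 3 with hrank
  set key : Fin m → ℕ ×ₗ Fin m := fun x => toLex (rank x, x) with hkey
  have hkeyinj : Function.Injective key := by
    intro x y hxy
    have := congrArg (fun p => (ofLex p).2) hxy
    simpa [hkey] using this
  set σ : Equiv.Perm (Fin m) := Tuple.sort key with hσ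
  have hmono : Monotone (key ∘ σ) := Tuple.monotone_sort key
  have hsm : StrictMono (key ∘ σ) :=
    hmono.strictMono_of_injective (hkeyinj.comp σ.injective)
  set π : Equiv.Perm (Fin m) := σ.symm with hπ
  have hgpi : ∀ x, (key ∘ σ) (π x) = key x := by
    intro x; simp [hπ]
  have hlt : ∀ x y, π x < π y ↔ key x < key y := by
    intro x y
    rw [← hgpi x, ← hgpi y, hsm.lt_iff_lt]
  -- rank comparison for elements of A vs non-elements
  have hrankA : ∀ a ∈ A, ∀ x, x ∉ A → π a < π x := by
    intro a ha x hx
    rw [hlt]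
    refine Prod.Lex.toLex_lt_toLex.mpr (Or.inl ?_)
    simp only [hrank]
    rw [if_pos ha, if_neg hx]
    split_ifs <;> norm_num
  set P : Finset (Fin m) := A ∪ B with hP
  have hrankP : ∀ x, x ∈ P ↔ rank x ≤ 1 := by
    intro x
    simp only [hP, Finset.mem_union, hrank]
    split_ifs with h1 h2 h3
    · simpa using Or.inl h1
    · simpa using Or.inr h2
    · simp [h1, h2]
    · simp [h1, h2]
  set W : Fin m → Fin m → ℝ := fun i j => if i ∈ P ∧ j ∈ P then 0 else 1 with hW
  have hW01 : ∀ i j, W i j = 0 ∨ W i j = 1 := by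
    intro i j; simp only [hW]; split_ifs <;> simp
  have hWnn : ∀ i j, (0:ℝ) ≤ W i j := by
    intro i j; rcases hW01 i j with h | h <;> rw [h] <;> norm_num
  -- key monotone consequence: σ preserves membership in P downwards
  have hPdown : ∀ i j : Fin m, i ≤ j → σ j ∈ P → σ i ∈ P := by
    intro i j hij hj
    have hk : key (σ i) ≤ key (σ j) := hmono hij
    have hr : rank (σ i) ≤ rank (σ j) := by
      rcases Prod.Lex.toLex_le_toLex.mp hk with h | h
      · exact le_of_lt h
      · exact le_of_eq h.1
    exact (hrankP _).mpr (hr.trans ((hrankP _).mp hj))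
  have hWmono : ∀ i j j' : Fin m, j ≤ j' → W (σ i) (σ j) ≤ W (σ i) (σ j') := by
    intro i j j' hjj'
    by_cases h' : σ i ∈ P ∧ σ j' ∈ P
    · have hj : σ j ∈ P := hPdown j j' hjj' h'.2
      simp only [hW]
      rw [if_pos (⟨h'.1, hj⟩ : σ i ∈ P ∧ σ j ∈ P), if_pos h']
    · have h1 : W (σ i) (σ j') = 1 := by simp only [hW, if_neg h']
      rw [h1]
      rcases hW01 (σ i) (σ j) with h | h <;> rw [h] <;> norm_num
  have hWmono2 : ∀ j i i' : Fin m, i ≤ i' → W (σ i) (σ j) ≤ W (σ i') (σ j) := by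
    intro j i i' hii'
    by_cases h' : σ i' ∈ P ∧ σ j ∈ P
    · have hi : σ i ∈ P := hPdown i i' hii' h'.1
      simp only [hW]
      rw [if_pos (⟨hi, h'.2⟩ : σ i ∈ P ∧ σ j ∈ P), if_pos h']
    · have h1 : W (σ i') (σ j) = 1 := by simp only [hW, if_neg h']
      rw [h1]
      rcases hW01 (σ i) (σ j) with h | h <;> rw [h] <;> norm_num
  refine ⟨π, W, hW01, ?_, ?_, ?_⟩
  · intro i j j' hjj'
    simpa only [hπ, Equiv.symm_symm] using hWmono i j j' hjj'
  · intro j i i' hii'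
    simpa only [hπ, Equiv.symm_symm] using hWmono2 j i i' hii'
  · intro S0 hS0 hcrit
    -- facts
    have hS2P : S₂ ⊆ P := by
      intro x hx
      by_cases hx1 : x ∈ S₁
      · have hxK' : x ≠ K := fun he => hK2 (he ▸ hx)
        exact Finset.mem_union_left _ (Finset.mem_erase_of_ne_of_mem hxK' hx1)
      · exact Finset.mem_union_right _ (Finset.mem_sdiff.mpr ⟨hx, hx1⟩)
    have hsumS2 : ∑ i ∈ S₂, ∑ j ∈ S₂, W i j = 0 := by
      apply Finset.sum_eq_zero
      intro i hi
      apply Finset.sum_eq_zero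
      intro j hj
      show (if i ∈ P ∧ j ∈ P then (0:ℝ) else 1) = 0
      exact if_pos ⟨hS2P hi, hS2P hj⟩
    have hKP : K ∉ P := by
      intro h
      have h2 := (hrankP K).mp h
      simp [hrank, hKA, hKB] at h2
    have hsumS1 : (1:ℝ) ≤ ∑ i ∈ S₁, ∑ j ∈ S₁, W i j := by
      have hWKK : W K K = 1 := by simp only [hW]; rw [if_neg (fun h => hKP h.1)]
      calc (1:ℝ) = W K K := hWKK.symm
        _ ≤ ∑ j ∈ S₁, W K j :=
          Finset.single_le_sum (fun j _ => hWnn K j) hK1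
        _ ≤ ∑ i ∈ S₁, ∑ j ∈ S₁, W i j :=
          Finset.single_le_sum (fun i _ => Finset.sum_nonneg (fun j _ => hWnn i j)) hK1
    rcases hcrit S₁ h₁ with heq | hlex
    · -- S0 = S₁, S₂ is strictly better
      refine ⟨S₂, h₂, ?_⟩
      rw [hsumS2, ← heq]
      linarith
    · -- lex case: derive contradiction with hfail
      exfalso
      set T0 : Finset (Fin m) := S0.image π with hT0
      set T1 : Finset (Fin m) := S₁.image π with hT1
      have hcards : (T0.sort (· ≤ ·)).length = (T1.sort (· ≤ ·)).length := by
        rw [Finset.length_sort, Finset.length_sort, hT0, hT1,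
          Finset.card_image_of_injective _ π.injective,
          Finset.card_image_of_injective _ π.injective, hcard S0 hS0, hcard S₁ h₁]
      obtain ⟨d, hd0, hd1, hmin⟩ := lex_min_diff_aux hlex
        (Finset.sortedLT_sort _).pairwise (Finset.sortedLT_sort _).pairwise hcards
      rw [Finset.mem_sort] at hd0
      have hd1' : d ∉ T1 := fun h => hd1 ((Finset.mem_sort _).mpr h)
      have hmin' : ∀ e ∈ T1, e ∉ T0 → d < e := fun e he hne =>
        hmin e ((Finset.mem_sort _).mpr he) (fun h => hne ((Finset.mem_sort _).mp h))
      -- the element x₀ := π.symm d is in S0 but not in S₁ (hence not in A)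
      obtain ⟨x₀, hx₀0, hx₀d⟩ := Finset.mem_image.mp hd0
      have hx₀1 : x₀ ∉ S₁ := fun h => hd1' (Finset.mem_image.mpr ⟨x₀, h, hx₀d⟩)
      have hx₀A : x₀ ∉ A := fun h => hx₀1 (Finset.erase_subset _ _ h)
      -- A ⊆ S0
      have hAS0 : A ⊆ S0 := by
        intro a ha
        by_contra haS0
        have haT0 : π a ∉ T0 := by
          intro h
          obtain ⟨y, hy, hya⟩ := Finset.mem_image.mp h
          exact haS0 (π.injective hya ▸ hy)
        have haT1 : π a ∈ T1 :=
          Finset.mem_image.mpr ⟨a, Finset.erase_subset _ _ ha, rfl⟩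
        have h1 : d < π a := hmin' _ haT1 haT0
        have h2 : π a < π x₀ := hrankA a ha x₀ hx₀A
        rw [hx₀d] at h2
        exact lt_irrefl _ (h1.trans h2)
      -- S0 = insert x A for some x ∉ A
      have hcardA : A.card = s - 1 := by
        rw [hA, Finset.card_erase_of_mem hK1, hcard S₁ h₁]
      have hspos : 1 ≤ s := by
        rw [← hcard S₁ h₁]
        exact Finset.card_pos.mpr ⟨K, hK1⟩
      have hcarddiff : (S0 \ A).card = 1 := by
        rw [Finset.card_sdiff_of_subset hAS0, hcard S0 hS0, hcardA]
        omega
      obtain ⟨x, hx⟩ := Finset.card_eq_one.mp hcarddiff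
      have hxS0 : x ∈ S0 \ A := hx ▸ Finset.mem_singleton_self x
      have hxA : x ∉ A := (Finset.mem_sdiff.mp hxS0).2
      have hS0eq : S0 = insert x A := by
        have := Finset.sdiff_union_of_subset hAS0
        rw [hx] at this
        rw [← this, Finset.insert_eq]
      -- x ≠ K
      have hxK : x ≠ K := by
        intro hxk
        apply hd1'
        have : S0 = S₁ := by
          rw [hS0eq, hxk, hA, Finset.insert_erase hK1]
        rw [hT1, ← this]
        exact hd0
      have hxS1 : x ∉ S₁ := by
        intro h
        have hmem : x ∈ insert K (S₁.erase K) := by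
          rw [Finset.insert_erase hK1]; exact h
        rcases Finset.mem_insert.mp hmem with h' | h'
        · exact hxK h'
        · exact hxA h'
      -- π x < π K
      have hKT1 : π K ∈ T1 := Finset.mem_image.mpr ⟨K, hK1, rfl⟩
      have hKT0 : π K ∉ T0 := by
        intro h
        obtain ⟨y, hy, hyk⟩ := Finset.mem_image.mp h
        have : y = K := π.injective hyk
        rw [this] at hy
        rw [hS0eq] at hy
        rcases Finset.mem_insert.mp hy with h' | h'
        · exact hxK h'.symm
        · exact hKA h'
      have hdK : d < π K := hmin' _ hKT1 hKT0
      have hdx : d = π x := by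
        rw [hS0eq] at hx₀0
        rcases Finset.mem_insert.mp hx₀0 with h' | h'
        · rw [← hx₀d, h']
        · exact absurd h' hx₀A
      have hxltK : π x < π K := hdx ▸ hdK
      have hkeyxK : key x < key K := (hlt x K).mp hxltK
      have hrankx : x ∈ B := by
        rcases Prod.Lex.toLex_lt_toLex.mp hkeyxK with h | h
        · -- rank x < rank K = 2
          have hrK : rank K = 2 := by
            simp [hrank, hKA, hKB]
          rw [hrK] at h
          by_contra hxB
          have : rank x = 3 := by simp [hrank, hxA, hxB, hxK]
          omega
        · -- rank x = rank K, impossible since x ≠ K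
          exfalso
          have hrK : rank K = 2 := by
            simp [hrank, hKA, hKB]
          have h1 := h.1
          rw [hrK] at h1
          by_cases hxB : x ∈ B
          · have : rank x = 1 := by simp [hrank, hxA, hxB]
            omega
          · have : rank x = 3 := by simp [hrank, hxA, hxB, hxK]
            omega
      exact hfail x hrankx (hS0eq ▸ hS0)
end

section
/- An independence system (E, I) derived from a base system (E, F) is a matroid if and only if for every doubly graded cost matrix (after applying a suitable permutation π making rows and columns nondecreasing), the π-critical base is an optimal solution of the quadratic minimum weight base problem. -/
open Finset

section Helpers

variable {γ : Type*} [LinearOrder γ] [DecidableEq γ]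

private lemma lex_append (p : List γ) {l₁ l₂ : List γ}
    (h : List.Lex (· < ·) l₁ l₂) : List.Lex (· < ·) (p ++ l₁) (p ++ l₂) := by
  induction p with
  | nil => exact h
  | cons a p ih => exact List.Lex.cons ih

private lemma sort_union_append (P Q : Finset γ) (h : ∀ p ∈ P, ∀ q ∈ Q, p < q) :
    (P ∪ Q).sort (· ≤ ·) = P.sort (· ≤ ·) ++ Q.sort (· ≤ ·) := by
  have hd : Disjoint P Q := Finset.disjoint_left.2
    (fun a ha haQ => absurd (h a ha a haQ) (lt_irrefl _))
  have hperm : List.Perm ((P ∪ Q).sort (· ≤ ·)) (P.sort (· ≤ ·) ++ Q.sort (· ≤ ·)) := by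
    rw [← Multiset.coe_eq_coe]
    have h1 : ((P ∪ Q).sort (· ≤ ·) : Multiset γ) = (P ∪ Q).val := Finset.sort_eq _ _
    have h2 : ((P.sort (· ≤ ·) ++ Q.sort (· ≤ ·) : List γ) : Multiset γ)
        = (P.sort (· ≤ ·) : Multiset γ) + (Q.sort (· ≤ ·) : Multiset γ) := by
      simp [← Multiset.coe_add]
    rw [h1, h2, Finset.sort_eq, Finset.sort_eq, ← Finset.disjUnion_eq_union P Q hd]
    rfl
  have hs1 : List.Pairwise (· ≤ ·) ((P ∪ Q).sort (· ≤ ·)) := Finset.pairwise_sort _ _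
  have hs2 : List.Pairwise (· ≤ ·) (P.sort (· ≤ ·) ++ Q.sort (· ≤ ·)) := by
    refine List.pairwise_append.2 ⟨Finset.pairwise_sort _ _, Finset.pairwise_sort _ _,
      fun a ha b hb =>
        (h a ((Finset.mem_sort (· ≤ ·)).1 ha) b ((Finset.mem_sort (· ≤ ·)).1 hb)).le⟩
  exact List.Perm.eq_of_pairwise' hs1 hs2 hperm

private lemma sort_eq_cons_of_min (Q : Finset γ) (b : γ) (hb : b ∈ Q)
    (hmin : ∀ x ∈ Q, b ≤ x) :
    Q.sort (· ≤ ·) = b :: (Q.erase b).sort (· ≤ ·) := by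
  have h1 : Q = {b} ∪ Q.erase b := by
    rw [← Finset.insert_eq, Finset.insert_erase hb]
  have h2 := sort_union_append {b} (Q.erase b) (by
    intro p hp q hq
    rw [Finset.mem_singleton] at hp
    subst hp
    exact lt_of_le_of_ne (hmin q (Finset.mem_of_mem_erase hq))
      (Ne.symm (Finset.ne_of_mem_erase hq)))
  rw [← h1] at h2
  rw [h2, Finset.sort_singleton]
  rfl

private lemma lex_of_insert_erase {A : Finset γ} {a b : γ} (ha : a ∈ A) (hb : b ∉ A)
    (hba : b < a) :
    List.Lex (· < ·) ((insert b (A.erase a)).sort (· ≤ ·)) (A.sort (· ≤ ·)) := by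
  set B := insert b (A.erase a) with hB
  have hsplitA : A.sort (· ≤ ·)
      = (A.filter (· < b)).sort (· ≤ ·) ++ (A.filter (fun x => ¬ x < b)).sort (· ≤ ·) := by
    rw [← sort_union_append _ _ (fun p hp q hq =>
      lt_of_lt_of_le (Finset.mem_filter.1 hp).2 (le_of_not_gt (Finset.mem_filter.1 hq).2)),
      Finset.filter_union_filter_not_eq]
  have hsplitB : B.sort (· ≤ ·)
      = (B.filter (· < b)).sort (· ≤ ·) ++ (B.filter (fun x => ¬ x < b)).sort (· ≤ ·) := by
    rw [← sort_union_append _ _ (fun p hp q hq =>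
      lt_of_lt_of_le (Finset.mem_filter.1 hp).2 (le_of_not_gt (Finset.mem_filter.1 hq).2)),
      Finset.filter_union_filter_not_eq]
  have hPB : B.filter (· < b) = A.filter (· < b) := by
    ext x
    simp only [hB, Finset.mem_filter, Finset.mem_insert, Finset.mem_erase]
    constructor
    · rintro ⟨h1 | ⟨h2, h3⟩, h4⟩
      · exact absurd h4 (h1 ▸ lt_irrefl b)
      · exact ⟨h3, h4⟩
    · rintro ⟨h1, h2⟩
      exact ⟨Or.inr ⟨fun hx => absurd (hx ▸ h2) (not_lt.2 hba.le), h1⟩, h2⟩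
  have hbB : b ∈ B.filter (fun x => ¬ x < b) :=
    Finset.mem_filter.2 ⟨Finset.mem_insert_self _ _, lt_irrefl b⟩
  have hsortQB := sort_eq_cons_of_min (B.filter (fun x => ¬ x < b)) b hbB
    (fun x hx => le_of_not_gt (Finset.mem_filter.1 hx).2)
  have haQA : a ∈ A.filter (fun x => ¬ x < b) :=
    Finset.mem_filter.2 ⟨ha, not_lt.2 hba.le⟩
  obtain ⟨x, tl, hxt⟩ : ∃ x tl, (A.filter (fun x => ¬ x < b)).sort (· ≤ ·) = x :: tl := by
    cases hc : (A.filter (fun x => ¬ x < b)).sort (· ≤ ·) with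
    | nil =>
      exfalso
      have := (Finset.mem_sort (· ≤ ·)).2 haQA
      rw [hc] at this
      exact absurd this (List.not_mem_nil)
    | cons x tl => exact ⟨x, tl, rfl⟩
  have hxm : x ∈ A.filter (fun x => ¬ x < b) := by
    have : x ∈ (A.filter (fun x => ¬ x < b)).sort (· ≤ ·) := by
      rw [hxt]; exact List.mem_cons_self
    exact (Finset.mem_sort (· ≤ ·)).1 this
  have hbx : b < x :=
    lt_of_le_of_ne (le_of_not_gt (Finset.mem_filter.1 hxm).2)
      (fun hbe => hb (hbe ▸ (Finset.mem_filter.1 hxm).1))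
  rw [hsplitA, hsplitB, hPB, hsortQB, hxt]
  exact lex_append _ (List.Lex.rel hbx)

private lemma sort_get_le_iff (A : Finset γ) (t : γ) (k : ℕ)
    (hk : k < (A.sort (· ≤ ·)).length) :
    (A.sort (· ≤ ·)).get ⟨k, hk⟩ ≤ t ↔ k < (A.filter (· ≤ t)).card := by
  have hsplit : A.sort (· ≤ ·)
      = (A.filter (· ≤ t)).sort (· ≤ ·) ++ (A.filter (fun x => ¬ x ≤ t)).sort (· ≤ ·) := by
    rw [← sort_union_append _ _ (fun p hp q hq =>
      lt_of_le_of_lt (Finset.mem_filter.1 hp).2 (lt_of_not_ge (Finset.mem_filter.1 hq).2)),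
      Finset.filter_union_filter_not_eq]
  set LP := (A.filter (· ≤ t)).sort (· ≤ ·) with hLP
  set LQ := (A.filter (fun x => ¬ x ≤ t)).sort (· ≤ ·) with hLQ
  have hlenP : LP.length = (A.filter (· ≤ t)).card := Finset.length_sort _
  have hk' : k < (LP ++ LQ).length := by rw [← hsplit]; exact hk
  have hget0 : (A.sort (· ≤ ·)).get ⟨k, hk⟩ = (LP ++ LQ)[k]'hk' := by
    have := List.get_of_eq hsplit ⟨k, hk⟩
    simpa [List.get_eq_getElem] using this
  by_cases hkc : k < (A.filter (· ≤ t)).card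
  · refine ⟨fun _ => hkc, fun _ => ?_⟩
    have hkP : k < LP.length := by rw [hlenP]; exact hkc
    have hmem : (A.sort (· ≤ ·)).get ⟨k, hk⟩ ∈ A.filter (· ≤ t) := by
      rw [hget0, List.getElem_append_left hkP]
      exact (Finset.mem_sort (· ≤ ·)).1 (List.getElem_mem hkP)
    exact (Finset.mem_filter.1 hmem).2
  · refine ⟨fun hle => ?_, fun h => absurd h hkc⟩
    exfalso
    have hkP : LP.length ≤ k := by rw [hlenP]; exact le_of_not_gt hkc
    have hk2 : k - LP.length < LQ.length := by
      have := hk'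
      rw [List.length_append] at this
      omega
    have hmem : (A.sort (· ≤ ·)).get ⟨k, hk⟩ ∈ A.filter (fun x => ¬ x ≤ t) := by
      rw [hget0, List.getElem_append_right hkP]
      exact (Finset.mem_sort (· ≤ ·)).1 (List.getElem_mem hk2)
    exact (Finset.mem_filter.1 hmem).2 hle

private lemma sum_sort_fin (A : Finset γ) (g : γ → ℝ) :
    ∑ x ∈ A, g x = ∑ k : Fin ((A.sort (· ≤ ·)).length), g ((A.sort (· ≤ ·)).get k) := by
  have h1 : (∑ k : Fin ((A.sort (· ≤ ·)).length), g ((A.sort (· ≤ ·)).get k))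
      = ((A.sort (· ≤ ·)).map g).sum := by
    rw [← List.sum_ofFn]
    conv_rhs => rw [← List.ofFn_get (A.sort (· ≤ ·))]
    rw [List.map_ofFn]
    rfl
  rw [h1, ← List.sum_toFinset _ (Finset.sort_nodup _ _), Finset.sort_toFinset]


private lemma exists_lexmin {m : ℕ} (G : Finset (Finset (Fin m))) (hG : G.Nonempty)
    (π : Equiv.Perm (Fin m)) :
    ∃ S0 ∈ G, ∀ S ∈ G, S = S0 ∨
      List.Lex (· < ·) ((S0.image π).sort (· ≤ ·)) ((S.image π).sort (· ≤ ·)) := by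
  have eqext : ∀ X Y : Finset (Fin m),
      (X.image π).sort (· ≤ ·) = (Y.image π).sort (· ≤ ·) → X = Y := by
    intro X Y h
    have := congrArg List.toFinset h
    rw [Finset.sort_toFinset, Finset.sort_toFinset] at this
    exact Finset.image_injective π.injective this
  revert hG
  induction G using Finset.induction_on with
  | empty => intro h; exact absurd h (by simp)
  | @insert a G' ha ih =>
    intro _
    rcases G'.eq_empty_or_nonempty with hG' | hG'
    · subst hG'
      refine ⟨a, Finset.mem_insert_self _ _, ?_⟩
      intro S hS
      left
      simpa using hS
    · obtain ⟨S0, hS0, hmin⟩ := ih hG'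
      have tri := fun a b => trichotomous_of (r := List.Lex (α := Fin m) (· < ·)) a b
      rcases tri ((a.image π).sort (· ≤ ·)) ((S0.image π).sort (· ≤ ·)) with h | h | h
      · refine ⟨a, Finset.mem_insert_self _ _, ?_⟩
        intro S hS
        rcases Finset.mem_insert.1 hS with rfl | hS'
        · left; rfl
        · rcases hmin S hS' with rfl | h2
          · right; exact h
          · right; exact List.lt_trans (α := Fin m) h h2
      · have : a = S0 := eqext _ _ h
        subst this
        refine ⟨a, Finset.mem_insert_self _ _, ?_⟩
        intro S hS
        rcases Finset.mem_insert.1 hS with rfl | hS'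
        · left; rfl
        · exact hmin S hS'
      · refine ⟨S0, Finset.mem_insert_of_mem hS0, ?_⟩
        intro S hS
        rcases Finset.mem_insert.1 hS with rfl | hS'
        · right; exact h
        · exact hmin S hS'

private lemma count_le_lexmin {m s : ℕ} {F : Set (Finset (Fin m))}
    (hcard : ∀ S ∈ F, S.card = s)
    (hex : ∀ S₁ ∈ F, ∀ S₂ ∈ F, ∀ i ∈ S₁ \ S₂, ∃ j ∈ S₂ \ S₁, insert j (S₁.erase i) ∈ F)
    (π : Equiv.Perm (Fin m)) {S0 : Finset (Fin m)} (hS0 : S0 ∈ F)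
    (hlex : ∀ S ∈ F, S = S0 ∨
      List.Lex (· < ·) ((S0.image π).sort (· ≤ ·)) ((S.image π).sort (· ≤ ·)))
    (t : Fin m) :
    ∀ S ∈ F, (S.filter fun x => π x ≤ t).card ≤ (S0.filter fun x => π x ≤ t).card := by
  suffices H : ∀ n S, S ∈ F → (S \ S0).card ≤ n →
      (S.filter fun x => π x ≤ t).card ≤ (S0.filter fun x => π x ≤ t).card by
    intro S hS; exact H _ S hS le_rfl
  intro n
  induction n with
  | zero =>
    intro S hS h0
    have hsub : S ⊆ S0 := by
      rw [← Finset.sdiff_eq_empty_iff_subset]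
      exact Finset.card_eq_zero.1 (Nat.le_zero.1 h0)
    have : S = S0 := Finset.eq_of_subset_of_card_le hsub
      (by rw [hcard S hS, hcard S0 hS0])
    rw [this]
  | succ n ih =>
    intro S hS hn
    by_cases h0 : (S \ S0).card ≤ n
    · exact ih S hS h0
    by_cases hcase : ∃ i ∈ S \ S0, ¬ π i ≤ t
    · obtain ⟨i, hiS, hit⟩ := hcase
      obtain ⟨j, hj, hS'⟩ := hex S hS S0 hS0 i hiS
      have hjS0 : j ∈ S0 := (Finset.mem_sdiff.1 hj).1
      have hi : i ∈ S := (Finset.mem_sdiff.1 hiS).1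
      have hdiff : (insert j (S.erase i)) \ S0 = (S \ S0).erase i := by
        ext x
        simp only [Finset.mem_sdiff, Finset.mem_insert, Finset.mem_erase]
        constructor
        · rintro ⟨h1 | ⟨hxi, hxS⟩, h2⟩
          · exact absurd (h1 ▸ hjS0) h2
          · exact ⟨hxi, hxS, h2⟩
        · rintro ⟨hxi, hxS, h2⟩
          exact ⟨Or.inr ⟨hxi, hxS⟩, h2⟩
      have hcard' : ((insert j (S.erase i)) \ S0).card ≤ n := by
        rw [hdiff, Finset.card_erase_of_mem hiS]
        omega
      have hmono : S.filter (fun x => π x ≤ t) ⊆ (insert j (S.erase i)).filter (fun x => π x ≤ t) := by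
        intro x hx
        obtain ⟨hxS, hxt⟩ := Finset.mem_filter.1 hx
        refine Finset.mem_filter.2 ⟨?_, hxt⟩
        exact Finset.mem_insert_of_mem (Finset.mem_erase.2 ⟨fun h => hit (h ▸ hxt), hxS⟩)
      exact le_trans (Finset.card_le_card hmono) (ih _ hS' hcard')
    · push_neg at hcase
      by_contra hcon
      push_neg at hcon
      have key : ∀ U V : Finset (Fin m),
          (U.filter fun x => π x ≤ t).card
            = ((U \ V).filter fun x => π x ≤ t).card
              + ((U ∩ V).filter fun x => π x ≤ t).card := by
        intro U V
        conv_lhs => rw [← Finset.sdiff_union_inter U V]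
        rw [Finset.filter_union, Finset.card_union_of_disjoint
          (Finset.disjoint_filter_filter (Finset.disjoint_sdiff_inter U V))]
      have hi0 : ∃ i0 ∈ S0 \ S, ¬ π i0 ≤ t := by
        by_contra hno
        push_neg at hno
        have h1 := key S S0
        have h2 := key S0 S
        rw [Finset.filter_true_of_mem hcase] at h1
        rw [Finset.filter_true_of_mem hno] at h2
        rw [Finset.inter_comm] at h2
        have h3 : (S \ S0).card = (S0 \ S).card :=
          Finset.card_sdiff_comm (by rw [hcard S hS, hcard S0 hS0])
        omega
      obtain ⟨i0, hi0m, hi0t⟩ := hi0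
      obtain ⟨j, hj, hS0'⟩ := hex S0 hS0 S hS i0 hi0m
      have hjS : j ∈ S := (Finset.mem_sdiff.1 hj).1
      have hjS0 : j ∉ S0 := (Finset.mem_sdiff.1 hj).2
      have hjt : π j ≤ t := hcase j (Finset.mem_sdiff.2 ⟨hjS, hjS0⟩)
      have hba : π j < π i0 := lt_of_le_of_lt hjt (lt_of_not_ge hi0t)
      have hne : insert j (S0.erase i0) ≠ S0 :=
        fun h => hjS0 (h ▸ Finset.mem_insert_self j _)
      have hlex2 := (hlex _ hS0').resolve_left hne
      have himg : ((insert j (S0.erase i0)).image π)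
          = insert (π j) ((S0.image π).erase (π i0)) := by
        rw [Finset.image_insert, Finset.image_erase π.injective]
      have hbmem : π j ∉ S0.image π := by
        intro hmem
        rcases Finset.mem_image.1 hmem with ⟨y, hy, hyy⟩
        exact hjS0 (π.injective hyy ▸ hy)
      have hlex3 : List.Lex (· < ·)
          (((insert j (S0.erase i0)).image π).sort (· ≤ ·))
          ((S0.image π).sort (· ≤ ·)) := by
        rw [himg]
        exact lex_of_insert_erase (A := S0.image π) (a := π i0) (b := π j)
          (Finset.mem_image_of_mem π (Finset.mem_sdiff.1 hi0m).1) hbmem hba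
      have hasym := (inferInstance : IsAsymm (List (Fin m)) (List.Lex (· < ·))).asymm
      exact hasym _ _ hlex3 hlex2

end Helpers


/-- A base system `(E, F)` (nonempty family of equal-cardinality bases) gives a matroid
(i.e., satisfies the base exchange property) if and only if for every cost matrix that is
permuted doubly graded via a permutation `π`, the `π`-critical (lexicographically smallest
under `π`) base is an optimal solution of the quadratic minimum weight base problem. -/
theorem matroid_iff_permuted_doubly_graded_lex_optimal (m s : ℕ)
    (F : Set (Finset (Fin m))) (hne : F.Nonempty)
    (hcard : ∀ S ∈ F, S.card = s) :
    (∀ S₁ ∈ F, ∀ S₂ ∈ F, ∀ i ∈ S₁ \ S₂, ∃ j ∈ S₂ \ S₁, insert j (S₁.erase i) ∈ F) ↔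
    (∀ (W : Fin m → Fin m → ℝ) (π : Equiv.Perm (Fin m)),
      (∀ i, Monotone (fun j => W (π.symm i) (π.symm j))) →
      (∀ j, Monotone (fun i => W (π.symm i) (π.symm j))) →
      ∀ S0 ∈ F,
        (∀ S ∈ F, S = S0 ∨
          List.Lex (· < ·) ((S0.image π).sort (· ≤ ·)) ((S.image π).sort (· ≤ ·))) →
        ∀ S ∈ F, ∑ i ∈ S0, ∑ j ∈ S0, W i j ≤ ∑ i ∈ S, ∑ j ∈ S, W i j) := by
  constructor
  · -- forward: exchange implies optimality of the lex-min base
    intro hex W π hrow hcol S0 hS0 hlex S hS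
    have hcount := count_le_lexmin hcard hex π hS0 hlex
    have hlenA : ((S0.image π).sort (· ≤ ·)).length = s := by
      rw [Finset.length_sort, Finset.card_image_of_injective _ π.injective, hcard S0 hS0]
    have hlenB : ((S.image π).sort (· ≤ ·)).length = s := by
      rw [Finset.length_sort, Finset.card_image_of_injective _ π.injective, hcard S hS]
    set LA := (S0.image π).sort (· ≤ ·) with hLA
    set LB := (S.image π).sort (· ≤ ·) with hLB
    have hkA : ∀ k : Fin s, (k : ℕ) < LA.length := fun k => by
      rw [hlenA]; exact k.isLt
    have hkB : ∀ k : Fin s, (k : ℕ) < LB.length := fun k => by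
      rw [hlenB]; exact k.isLt
    set aA : Fin s → Fin m := fun k => LA.get ⟨k, hkA k⟩ with haA
    set bB : Fin s → Fin m := fun k => LB.get ⟨k, hkB k⟩ with hbB
    have haux : ∀ (U : Finset (Fin m)) (t : Fin m),
        ((U.image π).filter (· ≤ t)).card = (U.filter fun x => π x ≤ t).card := by
      intro U t
      rw [← Finset.card_image_of_injective (U.filter fun x => π x ≤ t) π.injective]
      congr 1
      ext y
      simp only [Finset.mem_filter, Finset.mem_image]
      constructor
      · rintro ⟨⟨x, hx, rfl⟩, hy⟩; exact ⟨x, ⟨hx, hy⟩, rfl⟩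
      · rintro ⟨x, ⟨hx, hxt⟩, rfl⟩; exact ⟨⟨x, hx, rfl⟩, hxt⟩
    have hdom : ∀ k : Fin s, aA k ≤ bB k := by
      intro k
      have h1 : (k : ℕ) < ((S.image π).filter (· ≤ bB k)).card :=
        (sort_get_le_iff (S.image π) (bB k) k (hkB k)).1 le_rfl
      have h2 : ((S.image π).filter (· ≤ bB k)).card
          ≤ ((S0.image π).filter (· ≤ bB k)).card := by
        rw [haux, haux]; exact hcount (bB k) S hS
      exact (sort_get_le_iff (S0.image π) (bB k) k (hkA k)).2 (lt_of_lt_of_le h1 h2)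
    have hsumA : ∀ f : Fin m → ℝ,
        ∑ x ∈ S0, f x = ∑ k : Fin s, f (π.symm (aA k)) := by
      intro f
      have e1 : ∑ y ∈ S0.image π, f (π.symm y) = ∑ x ∈ S0, f x := by
        rw [Finset.sum_image (fun x _ y _ h => π.injective h)]
        simp
      rw [← e1, sum_sort_fin (S0.image π) (fun y => f (π.symm y))]
      exact Fintype.sum_equiv (finCongr hlenA) _ _ (fun x => rfl)
    have hsumB : ∀ f : Fin m → ℝ,
        ∑ x ∈ S, f x = ∑ k : Fin s, f (π.symm (bB k)) := by
      intro f
      have e1 : ∑ y ∈ S.image π, f (π.symm y) = ∑ x ∈ S, f x := by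
        rw [Finset.sum_image (fun x _ y _ h => π.injective h)]
        simp
      rw [← e1, sum_sort_fin (S.image π) (fun y => f (π.symm y))]
      exact Fintype.sum_equiv (finCongr hlenB) _ _ (fun x => rfl)
    have eA : ∑ i ∈ S0, ∑ j ∈ S0, W i j
        = ∑ k : Fin s, ∑ l : Fin s, W (π.symm (aA k)) (π.symm (aA l)) := by
      rw [hsumA (fun i => ∑ j ∈ S0, W i j)]
      exact Finset.sum_congr rfl (fun k _ => hsumA _)
    have eB : ∑ i ∈ S, ∑ j ∈ S, W i j
        = ∑ k : Fin s, ∑ l : Fin s, W (π.symm (bB k)) (π.symm (bB l)) := by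
      rw [hsumB (fun i => ∑ j ∈ S, W i j)]
      exact Finset.sum_congr rfl (fun k _ => hsumB _)
    rw [eA, eB]
    refine Finset.sum_le_sum (fun k _ => Finset.sum_le_sum (fun l _ => ?_))
    calc W (π.symm (aA k)) (π.symm (aA l))
        ≤ W (π.symm (aA k)) (π.symm (bB l)) := hrow (aA k) (hdom l)
      _ ≤ W (π.symm (bB k)) (π.symm (bB l)) := hcol (bB l) (hdom k)
  · -- backward: optimality of the lex-min base implies exchange
    intro hopt S₁ hS₁ S₂ hS₂ i hi
    obtain ⟨hi1, hi2⟩ := Finset.mem_sdiff.1 hi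
    have hs1 : S₁.card = s := hcard S₁ hS₁
    have hspos : 0 < s := by rw [← hs1]; exact Finset.card_pos.2 ⟨i, hi1⟩
    set key : Fin m → ℕ :=
      fun x => if x ∈ S₁.erase i then 0 else if x ∈ S₂ \ S₁ then 1 else 2 with hkey
    set σ := Tuple.sort key with hσ
    set π := σ.symm with hπ
    have hmonokey : Monotone (fun p => key (π.symm p)) := by
      have := Tuple.monotone_sort key
      rw [hπ, Equiv.symm_symm]
      exact this
    -- the lex-min base
    have hFfin : F.Finite := Set.toFinite F
    obtain ⟨S0, hS0f, hminf⟩ := exists_lexmin hFfin.toFinset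
      (by rwa [Set.Finite.toFinset_nonempty]) π
    have hS0 : S0 ∈ F := hFfin.mem_toFinset.1 hS0f
    have hlexS : ∀ S ∈ F, S = S0 ∨
        List.Lex (· < ·) ((S0.image π).sort (· ≤ ·)) ((S.image π).sort (· ≤ ·)) :=
      fun S hS => hminf S (hFfin.mem_toFinset.2 hS)
    -- linear objective reduction
    have main : ∀ h : ℕ → ℝ, Monotone h → ∀ S, S ∈ F →
        ∑ x ∈ S0, h (key x) ≤ ∑ x ∈ S, h (key x) := by
      intro h hm S hS
      have hg : Monotone (fun j => h (key (π.symm j))) := hm.comp hmonokey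
      have hquad := hopt (fun x y => h (key x) + h (key y)) π
        (fun i0 => hg.const_add _) (fun j0 => hg.add_const _) S0 hS0 hlexS S hS
      have expand : ∀ U : Finset (Fin m), U ∈ F →
          ∑ x ∈ U, ∑ y ∈ U, (h (key x) + h (key y))
            = (s : ℝ) * ∑ x ∈ U, h (key x) + (s : ℝ) * ∑ x ∈ U, h (key x) := by
        intro U hU
        simp only [Finset.sum_add_distrib, Finset.sum_const, nsmul_eq_mul, hcard U hU,
          ← Finset.mul_sum]
        try ring
      rw [expand S0 hS0, expand S hS] at hquad
      have hsr : (0 : ℝ) < s := by exact_mod_cast hspos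
      nlinarith [hquad]
    -- key facts
    have hkey0 : ∀ x, key x = 0 ↔ x ∈ S₁.erase i := by
      intro x
      simp only [hkey]
      split_ifs with h1 h2 <;> simp [h1]
    have hkeyi : key i = 2 := by
      have h1 : i ∉ S₁.erase i := Finset.notMem_erase i S₁
      have h2 : i ∉ S₂ \ S₁ := fun h => hi2 (Finset.mem_sdiff.1 h).1
      simp only [hkey]
      rw [if_neg h1, if_neg h2]
    have hkeyS₂ : ∀ x ∈ S₂, key x ≤ 1 := by
      intro x hx
      by_cases hxS₁ : x ∈ S₁
      · have hxe : x ∈ S₁.erase i := Finset.mem_erase.2 ⟨fun h => hi2 (h ▸ hx), hxS₁⟩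
        simp only [hkey]
        rw [if_pos hxe]
        omega
      · have hxe : x ∉ S₁.erase i := fun h => hxS₁ (Finset.mem_of_mem_erase h)
        have hxd : x ∈ S₂ \ S₁ := Finset.mem_sdiff.2 ⟨hx, hxS₁⟩
        simp only [hkey]
        rw [if_neg hxe, if_pos hxd]
    -- first application: S0 avoids elements with key = 2
    have hS0key : ∀ x ∈ S0, key x ≤ 1 := by
      set h₁ : ℕ → ℝ := fun n => if n ≤ 1 then (0 : ℝ) else 1 with hh₁
      have hm1 : Monotone h₁ := by
        intro a b hab
        by_cases ha : a ≤ 1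
        · by_cases hb : b ≤ 1 <;> simp [hh₁, ha, hb]
        · have hb : ¬ b ≤ 1 := fun h => ha (le_trans hab h)
          simp [hh₁, ha, hb]
      have hzero : ∑ x ∈ S₂, h₁ (key x) = 0 :=
        Finset.sum_eq_zero (fun x hx => by simp [hh₁, hkeyS₂ x hx])
      have hle := main h₁ hm1 S₂ hS₂
      rw [hzero] at hle
      have hnn : ∀ x ∈ S0, 0 ≤ h₁ (key x) := by
        intro x _
        simp only [hh₁]
        split_ifs <;> norm_num
      have hall := (Finset.sum_eq_zero_iff_of_nonneg hnn).1
        (le_antisymm hle (Finset.sum_nonneg hnn))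
      intro x hx
      have := hall x hx
      simp only [hh₁] at this
      split_ifs at this with hc
      · exact hc
      · norm_num at this
    -- second application: S0 contains S₁.erase i
    have hK0sub : S₁.erase i ⊆ S0 := by
      set h₂ : ℕ → ℝ := fun n => if n = 0 then (0 : ℝ) else 1 with hh₂
      have hm2 : Monotone h₂ := by
        intro a b hab
        by_cases ha : a = 0
        · by_cases hb : b = 0 <;> simp [hh₂, ha, hb]
        · have hb : b ≠ 0 := by omega
          simp [hh₂, ha, hb]
      have hone : ∑ x ∈ S₁, h₂ (key x) = 1 := by
        rw [Finset.sum_eq_single_of_mem i hi1]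
        · simp [hh₂, hkeyi]
        · intro x hx hxi
          have : key x = 0 := (hkey0 x).2 (Finset.mem_erase.2 ⟨hxi, hx⟩)
          simp [hh₂, this]
      have hle := main h₂ hm2 S₁ hS₁
      rw [hone] at hle
      have hind : ∑ x ∈ S0, h₂ (key x)
          = ((S0.filter (fun x => ¬ key x = 0)).card : ℝ) := by
        rw [← Finset.sum_boole]
        refine Finset.sum_congr rfl (fun x _ => ?_)
        by_cases h : key x = 0 <;> simp [hh₂, h]
      rw [hind] at hle
      have hDle : (S0.filter (fun x => ¬ key x = 0)).card ≤ 1 := by exact_mod_cast hle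
      have hsplit := Finset.card_filter_add_card_filter_not
        (s := S0) (p := fun x => key x = 0)
      have hcard0 : S0.card = s := hcard S0 hS0
      have hEsub : S0.filter (fun x => key x = 0) ⊆ S₁.erase i := by
        intro x hx
        exact (hkey0 x).1 (Finset.mem_filter.1 hx).2
      have hcardE : (S₁.erase i).card = s - 1 := by
        rw [Finset.card_erase_of_mem hi1, hs1]
      have hEeq : S0.filter (fun x => key x = 0) = S₁.erase i := by
        apply Finset.eq_of_subset_of_card_le hEsub
        rw [hcardE]
        omega
      rw [← hEeq]
      exact Finset.filter_subset _ _
    -- extract the exchange element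
    have hcard0 : S0.card = s := hcard S0 hS0
    have hcardE : (S₁.erase i).card = s - 1 := by
      rw [Finset.card_erase_of_mem hi1, hs1]
    have hdiffcard : (S0 \ (S₁.erase i)).card = 1 := by
      rw [Finset.card_sdiff_of_subset hK0sub, hcard0, hcardE]
      omega
    obtain ⟨j, hjmem⟩ := Finset.card_pos.1 (by rw [hdiffcard]; norm_num :
      0 < (S0 \ (S₁.erase i)).card)
    obtain ⟨hjS0, hjK0⟩ := Finset.mem_sdiff.1 hjmem
    have hkeyj : key j = 1 := by
      have h1 := hS0key j hjS0
      have h2 : key j ≠ 0 := fun h => hjK0 ((hkey0 j).1 h)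
      omega
    have hjS₂ : j ∈ S₂ \ S₁ := by
      by_contra hc
      have h1 : j ∉ S₁.erase i := hjK0
      have : key j = 2 := by
        simp only [hkey]
        rw [if_neg h1, if_neg hc]
      omega
    refine ⟨j, hjS₂, ?_⟩
    have hfinal : insert j (S₁.erase i) = S0 := by
      apply Finset.eq_of_subset_of_card_le
      · exact Finset.insert_subset hjS0 hK0sub
      · rw [Finset.card_insert_of_notMem hjK0, hcardE, hcard0]
        omega
    rw [hfinal]
    exact hS0
end

section
/- If (E, F) are the bases of a matroid, W is a doubly graded matrix, and S⁰ is the lexicographically smallest base, then S⁰ minimizes the bottleneck quadratic objective max_{i,j ∈ S} w(i,j) over all bases S ∈ F. -/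
lemma lex_of_sorted (l1 l2 : List (Fin m)) (j : Fin m)
    (h1 : l1.Pairwise (· < ·)) (h2 : l2.Pairwise (· < ·))
    (hj1 : j ∈ l1) (hj2 : j ∉ l2)
    (hbelow : ∀ x, x < j → (x ∈ l1 ↔ x ∈ l2))
    (hlen : l1.length = l2.length) :
    List.Lex (· < ·) l1 l2 := by
  induction l1 generalizing l2 with
  | nil => simp at hj1
  | cons a t1 ih =>
    cases l2 with
    | nil => simp at hlen
    | cons b t2 =>
      have ha : a ≤ j := by
        rcases List.mem_cons.mp hj1 with h | h
        · exact le_of_eq h.symm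
        · exact le_of_lt (List.rel_of_pairwise_cons h1 h)
      rcases lt_or_eq_of_le ha with haj | haj
      · -- a < j, so a ∈ l2, and b = a
        have ha2 : a ∈ b :: t2 := (hbelow a haj).mp (List.mem_cons_self (a := a) (l := t1))
        have hba : b = a := by
          rcases List.mem_cons.mp ha2 with h | h
          · exact h.symm
          · -- b < a, but b ∈ l2 with b < j gives b ∈ l1, so a ≤ b
            have hblt : b < a := List.rel_of_pairwise_cons h2 h
            have hb1 : b ∈ a :: t1 := (hbelow b (lt_trans hblt haj)).mpr (List.mem_cons_self (a := b) (l := t2))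
            rcases List.mem_cons.mp hb1 with h' | h'
            · exact absurd (h' ▸ hblt) (lt_irrefl a)
            · exact absurd (List.rel_of_pairwise_cons h1 h') (not_lt.mpr hblt.le)
        subst hba
        apply List.Lex.cons
        apply ih t2 h1.of_cons h2.of_cons
        · rcases List.mem_cons.mp hj1 with h | h
          · exact absurd h.symm (ne_of_lt haj)
          · exact h
        · exact fun h => hj2 (List.mem_cons_of_mem _ h)
        · intro x hx
          constructor
          · intro hxt
            have := (hbelow x hx).mp (List.mem_cons_of_mem _ hxt)
            rcases List.mem_cons.mp this with h | h
            · exact absurd (h ▸ List.rel_of_pairwise_cons h1 hxt) (lt_irrefl _)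
            · exact h
          · intro hxt
            have := (hbelow x hx).mpr (List.mem_cons_of_mem _ hxt)
            rcases List.mem_cons.mp this with h | h
            · exact absurd (h ▸ List.rel_of_pairwise_cons h2 hxt) (lt_irrefl _)
            · exact h
        · simpa using hlen
      · -- a = j, so b ≠ j, and j < b
        subst haj
        have hab : a < b := by
          rcases lt_trichotomy a b with h | h | h
          · exact h
          · exact absurd (h ▸ List.mem_cons_self (a := b) (l := t2)) hj2
          · exact absurd ((hbelow b h).mpr (List.mem_cons_self (a := b) (l := t2)))
              (by intro hb; rcases List.mem_cons.mp hb with h' | h'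
                  · exact absurd (h' ▸ h) (lt_irrefl _)
                  · exact absurd (List.rel_of_pairwise_cons h1 h') (not_lt.mpr h.le))
        exact List.Lex.rel hab

lemma lex_smallest_max_le (m s : ℕ)
    (F : Set (Finset (Fin m)))
    (hcard : ∀ S ∈ F, S.card = s)
    (hex : ∀ S₁ ∈ F, ∀ S₂ ∈ F, ∀ i ∈ S₁ \ S₂, ∃ j ∈ S₂ \ S₁, insert j (S₁.erase i) ∈ F)
    (S0 : Finset (Fin m)) (hS0 : S0 ∈ F)
    (hlex : ∀ S ∈ F, S = S0 ∨
      List.Lex (· < ·) (S0.sort (· ≤ ·)) (S.sort (· ≤ ·)))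
    (S : Finset (Fin m)) (hS : S ∈ F) (h0ne : S0.Nonempty) (hSne : S.Nonempty) :
    S0.max' h0ne ≤ S.max' hSne := by
  by_contra hlt
  push_neg at hlt
  set i := S0.max' h0ne with hi
  have hiS0 : i ∈ S0 := S0.max'_mem h0ne
  have hiS : i ∉ S := fun h => absurd (S.le_max' i h) (not_le.mpr hlt)
  obtain ⟨j, hj, hS'⟩ := hex S0 hS0 S hS i (Finset.mem_sdiff.mpr ⟨hiS0, hiS⟩)
  obtain ⟨hjS, hjS0⟩ := Finset.mem_sdiff.mp hj
  set S' := insert j (S0.erase i) with hS'def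
  have hji : j < i := lt_of_le_of_lt (S.le_max' j hjS) hlt
  have hjS' : j ∈ S' := Finset.mem_insert_self _ _
  have hiS' : i ∉ S' := by
    intro h
    rcases Finset.mem_insert.mp h with h | h
    · exact absurd (h ▸ hji) (lt_irrefl i)
    · exact absurd rfl (Finset.ne_of_mem_erase h)
  have hNe : S' ≠ S0 := fun h => hjS0 (h ▸ hjS')
  have hlen : (S'.sort (· ≤ ·)).length = (S0.sort (· ≤ ·)).length := by
    rw [Finset.length_sort, Finset.length_sort, hcard S' hS', hcard S0 hS0]
  have hL : List.Lex (· < ·) (S'.sort (· ≤ ·)) (S0.sort (· ≤ ·)) := by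
    apply lex_of_sorted _ _ j (Finset.sortedLT_sort S').pairwise (Finset.sortedLT_sort S0).pairwise
    · exact (Finset.mem_sort _).mpr hjS'
    · exact fun h => hjS0 ((Finset.mem_sort _).mp h)
    · intro x hx
      rw [Finset.mem_sort, Finset.mem_sort]
      constructor
      · intro h
        rcases Finset.mem_insert.mp h with h | h
        · exact absurd (h ▸ hx) (lt_irrefl _)
        · exact Finset.mem_of_mem_erase h
      · intro h
        exact Finset.mem_insert_of_mem (Finset.mem_erase.mpr
          ⟨ne_of_lt (lt_trans hx hji), h⟩)
    · exact hlen
  rcases hlex S' hS' with h | h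
  · exact hNe h
  · exact absurd hL (asymm (r := List.Lex ((· < ·) : Fin m → Fin m → Prop)) h)

/-- If `(E, F)` are the bases of a matroid and `W` is doubly graded, then the
lexicographically smallest base `S⁰` minimizes the bottleneck quadratic objective
`max_{i,j ∈ S} w i j` over all bases. -/
theorem matroid_doubly_graded_lex_base_bottleneck_optimal (m s : ℕ)
    (F : Set (Finset (Fin m))) (hne : F.Nonempty)
    (hcard : ∀ S ∈ F, S.card = s)
    (hex : ∀ S₁ ∈ F, ∀ S₂ ∈ F, ∀ i ∈ S₁ \ S₂, ∃ j ∈ S₂ \ S₁, insert j (S₁.erase i) ∈ F)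
    (W : Fin m → Fin m → ℝ)
    (hrow : ∀ i, Monotone (W i))
    (hcol : ∀ j, Monotone (fun i => W i j))
    (S0 : Finset (Fin m)) (hS0 : S0 ∈ F)
    (hlex : ∀ S ∈ F, S = S0 ∨
      List.Lex (· < ·) (S0.sort (· ≤ ·)) (S.sort (· ≤ ·))) :
    ∀ S ∈ F,
      sSup {x : ℝ | ∃ i ∈ S0, ∃ j ∈ S0, x = W i j} ≤
      sSup {x : ℝ | ∃ i ∈ S, ∃ j ∈ S, x = W i j} := by
  intro S hS
  rcases S0.eq_empty_or_nonempty with h0e | h0ne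
  · have hSe : S = ∅ := by
      have h1 := hcard S0 hS0
      have h2 := hcard S hS
      rw [h0e, Finset.card_empty] at h1
      exact Finset.card_eq_zero.mp (h2.trans h1.symm)
    subst hSe
    rw [h0e]
  · have hSne : S.Nonempty := by
      rw [← Finset.card_pos, hcard S hS, ← hcard S0 hS0, Finset.card_pos]
      exact h0ne
    set M0 := S0.max' h0ne with hM0
    set MS := S.max' hSne with hMS
    have hMle : M0 ≤ MS := lex_smallest_max_le m s F hcard hex S0 hS0 hlex S hS h0ne hSne
    have hbdd : BddAbove {x : ℝ | ∃ i ∈ S, ∃ j ∈ S, x = W i j} := by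
      apply Set.Finite.bddAbove
      apply Set.Finite.subset (Set.finite_range (fun p : Fin m × Fin m => W p.1 p.2))
      rintro x ⟨i, _, j, _, rfl⟩
      exact ⟨(i, j), rfl⟩
    calc sSup {x : ℝ | ∃ i ∈ S0, ∃ j ∈ S0, x = W i j}
        ≤ W M0 M0 := by
          apply csSup_le
          · exact ⟨W M0 M0, M0, S0.max'_mem h0ne, M0, S0.max'_mem h0ne, rfl⟩
          rintro x ⟨i, hi, j, hj, rfl⟩
          exact le_trans (hrow i (S0.le_max' j hj)) (hcol M0 (S0.le_max' i hi))
      _ ≤ W MS MS := le_trans (hrow M0 hMle) (hcol MS hMle)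
      _ ≤ sSup {x : ℝ | ∃ i ∈ S, ∃ j ∈ S, x = W i j} :=
          le_csSup hbdd ⟨MS, S.max'_mem hSne, MS, S.max'_mem hSne, rfl⟩
end

section
/- If Q is an m×m row graded matrix (each row nondecreasing) and T⁰ is the lexicographically smallest spanning tree of a connected graph G on edges e_1,...,e_m, then for every i, T⁰ minimizes Σ_{e_j∈T} q(i,j) over all spanning trees T; i.e., a single tree simultaneously solves all m row-wise minimum spanning tree problems. -/
set_option linter.unusedSectionVars false

namespace RowGradedAux

variable {V : Type*} [Fintype V] {m : ℕ}

/-- The one-step edge relation determined by an edge set `S`. -/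
def EdgeRel (ends : Fin m → Sym2 V) (S : Finset (Fin m)) (a b : V) : Prop :=
  ∃ e ∈ S, ends e = s(a, b)

/-- Connectivity via edges in `S`. -/
def Conn (ends : Fin m → Sym2 V) (S : Finset (Fin m)) : V → V → Prop :=
  Relation.ReflTransGen (EdgeRel ends S)

variable {ends : Fin m → Sym2 V}

theorem edgeRel_symm {S : Finset (Fin m)} : Symmetric (EdgeRel ends S) := by
  rintro a b ⟨e, he, h⟩
  exact ⟨e, he, by rw [h, Sym2.eq_swap]⟩

theorem conn_refl (S : Finset (Fin m)) (a : V) : Conn ends S a a :=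
  Relation.ReflTransGen.refl

theorem conn_symm {S : Finset (Fin m)} : Symmetric (Conn ends S) :=
  fun a b h => by
    haveI : Std.Symm (EdgeRel ends S) := ⟨fun _ _ h => edgeRel_symm h⟩
    exact Std.Symm.symm (r := Relation.ReflTransGen (EdgeRel ends S)) a b h

theorem conn_trans {S : Finset (Fin m)} {a b c : V} (h : Conn ends S a b)
    (h' : Conn ends S b c) : Conn ends S a c :=
  Relation.ReflTransGen.trans h h'

theorem conn_mono {S S' : Finset (Fin m)} (hss : S ⊆ S') {a b : V}
    (h : Conn ends S a b) : Conn ends S' a b :=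
  Relation.ReflTransGen.mono (r := EdgeRel ends S) (p := EdgeRel ends S')
    (fun _ _ ⟨e, he, hh⟩ => ⟨e, hss he, hh⟩) a b h

theorem conn_of_edge {S : Finset (Fin m)} {f : Fin m} (hf : f ∈ S) {a b : V}
    (h : ends f = s(a, b)) : Conn ends S a b :=
  Relation.ReflTransGen.single ⟨f, hf, h⟩

/-- The connectivity setoid of an edge set. -/
def connSetoid (ends : Fin m → Sym2 V) (S : Finset (Fin m)) : Setoid V :=
  ⟨Conn ends S, ⟨conn_refl S, fun h => conn_symm h, fun h h' => conn_trans h h'⟩⟩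

/-- Number of connected components. -/
noncomputable def comp (ends : Fin m → Sym2 V) (S : Finset (Fin m)) : ℕ :=
  Nat.card (Quotient (connSetoid ends S))

/-- Splitting a connection through `insert f S` at the edge `f`. -/
theorem conn_insert_split {S : Finset (Fin m)} {f : Fin m} {a b : V}
    (hf : ends f = s(a, b)) {x y : V} (h : Conn ends (insert f S) x y) :
    Conn ends S x y ∨ (Conn ends S x a ∧ Conn ends S b y) ∨
      (Conn ends S x b ∧ Conn ends S a y) := by
  induction h with
  | refl => exact Or.inl Relation.ReflTransGen.refl
  | @tail c y hxc hcy ih =>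
    obtain ⟨e, he, hh⟩ := hcy
    rcases Finset.mem_insert.1 he with rfl | he
    · rw [hf] at hh
      rcases Sym2.eq_iff.1 hh with ⟨rfl, rfl⟩ | ⟨rfl, rfl⟩
      · -- c = a, y = b
        rcases ih with h | ⟨h1, h2⟩ | ⟨h1, h2⟩
        · exact Or.inr (Or.inl ⟨h, conn_refl S _⟩)
        · exact Or.inr (Or.inl ⟨h1, conn_refl S _⟩)
        · exact Or.inl h1
      · -- c = b, y = a
        rcases ih with h | ⟨h1, h2⟩ | ⟨h1, h2⟩
        · exact Or.inr (Or.inr ⟨h, conn_refl S _⟩)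
        · exact Or.inl h1
        · exact Or.inr (Or.inr ⟨h1, conn_refl S _⟩)
    · rcases ih with h | ⟨h1, h2⟩ | ⟨h1, h2⟩
      · exact Or.inl (conn_trans h (conn_of_edge he hh))
      · exact Or.inr (Or.inl ⟨h1, conn_trans h2 (conn_of_edge he hh)⟩)
      · exact Or.inr (Or.inr ⟨h1, conn_trans h2 (conn_of_edge he hh)⟩)

/-- If the endpoints of `f` are already connected, inserting `f` changes nothing. -/
theorem conn_insert_of_conn {S : Finset (Fin m)} {f : Fin m} {a b : V}
    (hf : ends f = s(a, b)) (hab : Conn ends S a b) {x y : V} :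
    Conn ends (insert f S) x y ↔ Conn ends S x y := by
  constructor
  · intro h
    rcases conn_insert_split hf h with h | ⟨h1, h2⟩ | ⟨h1, h2⟩
    · exact h
    · exact conn_trans h1 (conn_trans hab h2)
    · exact conn_trans h1 (conn_trans (conn_symm hab) h2)
  · exact conn_mono (Finset.subset_insert _ _)

theorem comp_le_of_conn_le {S S' : Finset (Fin m)}
    (h : ∀ x y, Conn ends S x y → Conn ends S' x y) :
    comp ends S' ≤ comp ends S := by
  apply Nat.card_le_card_of_surjective
    (Quotient.map (sa := connSetoid ends S) (sb := connSetoid ends S') id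
      (fun x y hxy => h x y hxy))
  intro q
  obtain ⟨x, rfl⟩ := Quot.exists_rep q
  exact ⟨Quotient.mk _ x, rfl⟩

/-- Inserting an edge whose endpoints are not yet connected drops the number of
components by exactly one. -/
theorem comp_insert_of_not_conn {S : Finset (Fin m)} {f : Fin m} {a b : V}
    (hf : ends f = s(a, b)) (hab : ¬ Conn ends S a b) :
    comp ends (insert f S) + 1 = comp ends S := by
  classical
  have hwd : ∀ x y : V, Conn ends (insert f S) x y →
      (if Conn ends S x b then (Quotient.mk (connSetoid ends S) a)
        else Quotient.mk (connSetoid ends S) x)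
      = (if Conn ends S y b then (Quotient.mk (connSetoid ends S) a)
        else Quotient.mk (connSetoid ends S) y) := by
    intro x y hxy
    rcases conn_insert_split hf hxy with h | ⟨h1, h2⟩ | ⟨h1, h2⟩
    · by_cases hx : Conn ends S x b
      · rw [if_pos hx, if_pos (conn_trans (conn_symm h) hx)]
      · rw [if_neg hx, if_neg (fun hy => hx (conn_trans h hy))]
        exact Quotient.sound h
    · have hx : ¬ Conn ends S x b := fun h => hab (conn_trans (conn_symm h1) h)
      have hy : Conn ends S y b := conn_symm h2
      rw [if_neg hx, if_pos hy]
      exact Quotient.sound h1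
    · have hx : Conn ends S x b := h1
      have hy : ¬ Conn ends S y b := fun h => hab (conn_trans h2 h)
      rw [if_pos hx, if_neg hy]
      exact Quotient.sound h2
  let ψ : Quotient (connSetoid ends (insert f S)) → Quotient (connSetoid ends S) :=
    Quotient.lift (fun x => if Conn ends S x b then (Quotient.mk (connSetoid ends S) a)
      else Quotient.mk (connSetoid ends S) x) hwd
  have hane : ∀ x, ψ (Quotient.mk (connSetoid ends (insert f S)) x)
      ≠ Quotient.mk (connSetoid ends S) b := by
    intro x h
    have h' : (if Conn ends S x b then (Quotient.mk (connSetoid ends S) a)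
        else Quotient.mk (connSetoid ends S) x) = Quotient.mk (connSetoid ends S) b := h
    by_cases hx : Conn ends S x b
    · rw [if_pos hx] at h'
      exact hab (Quotient.exact h')
    · rw [if_neg hx] at h'
      exact hx (Quotient.exact h')
  have hinj : Function.Injective ψ := by
    intro q1 q2 h
    obtain ⟨x, rfl⟩ := Quot.exists_rep q1
    obtain ⟨y, rfl⟩ := Quot.exists_rep q2
    have h' : (if Conn ends S x b then (Quotient.mk (connSetoid ends S) a)
        else Quotient.mk (connSetoid ends S) x)
      = (if Conn ends S y b then (Quotient.mk (connSetoid ends S) a)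
        else Quotient.mk (connSetoid ends S) y) := h
    have key : Conn ends (insert f S) x y := by
      by_cases hx : Conn ends S x b <;> by_cases hy : Conn ends S y b
      · exact conn_mono (Finset.subset_insert f S) (conn_trans hx (conn_symm hy))
      · rw [if_pos hx, if_neg hy] at h'
        exact conn_trans (conn_mono (Finset.subset_insert f S) hx)
          (conn_trans (conn_symm (conn_of_edge (Finset.mem_insert_self f S) hf))
            (conn_mono (Finset.subset_insert f S) (Quotient.exact h')))
      · rw [if_neg hx, if_pos hy] at h'
        exact conn_trans (conn_mono (Finset.subset_insert f S) (Quotient.exact h'))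
          (conn_trans (conn_of_edge (Finset.mem_insert_self f S) hf)
            (conn_mono (Finset.subset_insert f S) (conn_symm hy)))
      · rw [if_neg hx, if_neg hy] at h'
        exact conn_mono (Finset.subset_insert f S) (Quotient.exact h')
    exact Quotient.sound key
  have hsurj : ∀ q : Quotient (connSetoid ends S),
      q ≠ Quotient.mk (connSetoid ends S) b → ∃ q', ψ q' = q := by
    intro q hq
    obtain ⟨x, rfl⟩ := Quot.exists_rep q
    refine ⟨Quotient.mk (connSetoid ends (insert f S)) x, ?_⟩
    have hx : ¬ Conn ends S x b := fun h => hq (Quotient.sound h)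
    show (if Conn ends S x b then (Quotient.mk (connSetoid ends S) a)
        else Quotient.mk (connSetoid ends S) x) = _
    exact if_neg hx
  have hbij : Function.Bijective
      (fun o : Option (Quotient (connSetoid ends (insert f S))) =>
        o.elim (Quotient.mk (connSetoid ends S) b) ψ) := by
    constructor
    · rintro (_ | q1) (_ | q2) h
      · rfl
      · obtain ⟨x, rfl⟩ := Quot.exists_rep q2
        exact absurd h.symm (hane x)
      · obtain ⟨x, rfl⟩ := Quot.exists_rep q1
        exact absurd h (hane x)
      · exact congrArg _ (hinj h)
    · intro q
      by_cases hq : q = Quotient.mk (connSetoid ends S) b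
      · exact ⟨none, hq.symm⟩
      · obtain ⟨q', hq'⟩ := hsurj q hq
        exact ⟨some q', hq'⟩
  have key : Nat.card (Quotient (connSetoid ends S))
      = Nat.card (Quotient (connSetoid ends (insert f S))) + 1 := by
    rw [← Nat.card_eq_of_bijective _ hbij, Finite.card_option]
  rw [comp, comp, key]

theorem comp_insert_of_conn {S : Finset (Fin m)} {f : Fin m} {a b : V}
    (hf : ends f = s(a, b)) (hab : Conn ends S a b) :
    comp ends (insert f S) = comp ends S := by
  apply le_antisymm
  · exact comp_le_of_conn_le (fun x y h => conn_mono (Finset.subset_insert f S) h)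
  · exact comp_le_of_conn_le (fun x y h => (conn_insert_of_conn hf hab).1 h)

theorem comp_empty : comp ends (∅ : Finset (Fin m)) = Fintype.card V := by
  have : Function.Bijective (Quotient.mk (connSetoid ends (∅ : Finset (Fin m)))) := by
    constructor
    · intro x y h
      have h' : Conn ends ∅ x y := Quotient.eq.1 h
      induction h' with
      | refl => rfl
      | tail _ hcy ih => exact absurd hcy.choose_spec.1 (Finset.notMem_empty _)
    · intro q; obtain ⟨x, rfl⟩ := Quot.exists_rep q; exact ⟨x, rfl⟩
  rw [comp, ← Nat.card_eq_of_bijective _ this, Nat.card_eq_fintype_card]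

theorem comp_add_card_ge (S : Finset (Fin m)) :
    Fintype.card V ≤ comp ends S + S.card := by
  classical
  induction S using Finset.induction_on with
  | empty => simp [comp_empty]
  | @insert f S hf ih =>
    obtain ⟨⟨a, b⟩, hab⟩ := Quot.exists_rep (ends f)
    have hfe : ends f = s(a, b) := hab.symm
    rw [Finset.card_insert_of_notMem hf]
    by_cases hc : Conn ends S a b
    · rw [comp_insert_of_conn hfe hc]; omega
    · have := comp_insert_of_not_conn hfe hc; omega

/-- An edge set is spanning if it connects every two vertices. -/
def Spanning (ends : Fin m → Sym2 V) (S : Finset (Fin m)) : Prop :=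
  ∀ u v : V, Conn ends S u v

/-- An edge set is a forest if no edge's endpoints are connected without it. -/
def IsForest (ends : Fin m → Sym2 V) (F : Finset (Fin m)) : Prop :=
  ∀ f ∈ F, ∀ a b : V, ends f = s(a, b) → ¬ Conn ends (F.erase f) a b

theorem comp_eq_one_of_spanning [Nonempty V] {S : Finset (Fin m)}
    (h : Spanning ends S) : comp ends S = 1 := by
  rw [comp, Nat.card_eq_one_iff_unique]
  refine ⟨⟨fun q1 q2 => ?_⟩, ⟨Quotient.mk _ (Classical.arbitrary V)⟩⟩
  obtain ⟨x, rfl⟩ := Quot.exists_rep q1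
  obtain ⟨y, rfl⟩ := Quot.exists_rep q2
  exact Quotient.sound (h x y)

theorem isForest_subset {F F' : Finset (Fin m)} (hss : F' ⊆ F)
    (hF : IsForest ends F) : IsForest ends F' := by
  intro f hf a b hab hconn
  exact hF f (hss hf) a b hab (conn_mono (Finset.erase_subset_erase f hss) hconn)

theorem isForest_insert {F : Finset (Fin m)} (hF : IsForest ends F) {f : Fin m}
    {a b : V} (hf : ends f = s(a, b)) (hab : ¬ Conn ends F a b) :
    IsForest ends (insert f F) := by
  classical
  have hfF : f ∉ F := by
    intro hfF
    exact hab (conn_of_edge hfF hf)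
  intro g hg u v huv hconn
  rcases Finset.mem_insert.1 hg with rfl | hg
  · rw [Finset.erase_insert hfF] at hconn
    rw [hf] at huv
    rcases Sym2.eq_iff.1 huv with ⟨rfl, rfl⟩ | ⟨rfl, rfl⟩
    · exact hab hconn
    · exact hab (conn_symm hconn)
  · have hgf : f ≠ g := fun h => hfF (h ▸ hg)
    rw [Finset.erase_insert_of_ne hgf] at hconn
    rcases conn_insert_split hf hconn with h | ⟨h1, h2⟩ | ⟨h1, h2⟩
    · exact hF g hg u v huv h
    · -- u ~ a and b ~ v in F.erase g; but u ~ v in F via g, so a ~ b in F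
      refine hab ?_
      have huv' : Conn ends F u v := conn_of_edge hg huv
      have h1' : Conn ends F a u := conn_symm (conn_mono (Finset.erase_subset g F) h1)
      have h2' : Conn ends F v b := conn_symm (conn_mono (Finset.erase_subset g F) h2)
      exact conn_trans h1' (conn_trans huv' h2')
    · refine hab ?_
      have huv' : Conn ends F v u := conn_symm (conn_of_edge hg huv)
      have h1' : Conn ends F a v := conn_mono (Finset.erase_subset g F) h2
      have h2' : Conn ends F u b := conn_mono (Finset.erase_subset g F) h1
      exact conn_trans h1' (conn_trans huv' h2')

theorem isForest_card {F : Finset (Fin m)} (hF : IsForest ends F) :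
    comp ends F + F.card = Fintype.card V := by
  classical
  induction F using Finset.induction_on with
  | empty => simp [comp_empty]
  | @insert f F hf ih =>
    obtain ⟨⟨a, b⟩, hab⟩ := Quot.exists_rep (ends f)
    have hfe : ends f = s(a, b) := hab.symm
    have hnc : ¬ Conn ends F a b := by
      have := hF f (Finset.mem_insert_self f F) a b hfe
      rwa [Finset.erase_insert hf] at this
    have hcomp := comp_insert_of_not_conn hfe hnc
    have := ih (isForest_subset (Finset.subset_insert f F) hF)
    rw [Finset.card_insert_of_notMem hf]
    omega

/-- The spanning-tree predicate, phrased with `Conn`. -/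
theorem spanning_of_isSpanningTree {T : Finset (Fin m)}
    (hT : IsSpanningTree ends T) : Spanning ends T := hT.2

theorem isForest_of_isSpanningTree {T : Finset (Fin m)}
    (hT : IsSpanningTree ends T) : IsForest ends T := by
  classical
  intro f hf a b hab hconn
  have hsp : Spanning ends (T.erase f) := by
    intro u v
    have : Conn ends T u v := hT.2 u v
    have hins : T = insert f (T.erase f) := (Finset.insert_erase hf).symm
    rw [hins] at this
    exact (conn_insert_of_conn hab hconn).1 this
  have hne : Nonempty V := by
    have h1 := hT.1
    exact Fintype.card_pos_iff.1 (by omega)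
  have h1 : comp ends (T.erase f) = 1 := comp_eq_one_of_spanning hsp
  have h2 := comp_add_card_ge (ends := ends) (T.erase f)
  rw [Finset.card_erase_of_mem hf] at h2
  have h3 := hT.1
  have h4 : 0 < T.card := Finset.card_pos.2 ⟨f, hf⟩
  omega

/-- Forest augmentation: a larger forest contains an edge that can be added to a
smaller one keeping it a forest. -/
theorem forest_augment {I J : Finset (Fin m)} (hI : IsForest ends I)
    (hJ : IsForest ends J) (hcard : I.card < J.card) :
    ∃ f ∈ J, f ∉ I ∧ ∃ a b : V, ends f = s(a, b) ∧ ¬ Conn ends I a b := by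
  by_contra hcon
  push_neg at hcon
  have hle : ∀ x y, Conn ends J x y → Conn ends I x y := by
    intro x y h
    induction h with
    | refl => exact conn_refl I _
    | tail _ hcy ih =>
      obtain ⟨e, he, hh⟩ := hcy
      by_cases heI : e ∈ I
      · exact conn_trans ih (conn_of_edge heI hh)
      · exact conn_trans ih (hcon e he heI _ _ hh)
  have h1 := comp_le_of_conn_le hle
  have h2 := isForest_card hI
  have h3 := isForest_card hJ
  omega

/-- Extend a forest inside a spanning edge set to a spanning tree. -/
theorem exists_spanning_tree_between [Nonempty V] {S F : Finset (Fin m)}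
    (hS : Spanning ends S) (hFS : F ⊆ S) (hF : IsForest ends F) :
    ∃ B : Finset (Fin m), F ⊆ B ∧ B ⊆ S ∧ IsSpanningTree ends B := by
  classical
  let 𝒞 : Finset (Finset (Fin m)) :=
    S.powerset.filter (fun B => F ⊆ B ∧ IsForest ends B)
  have hne : 𝒞.Nonempty := ⟨F, by simp [𝒞, Finset.mem_powerset, hFS, hF]⟩
  obtain ⟨B, hB𝒞, hmax⟩ := Finset.exists_max_image 𝒞 Finset.card hne
  simp only [𝒞, Finset.mem_filter, Finset.mem_powerset] at hB𝒞
  obtain ⟨hBS, hFB, hBforest⟩ := hB𝒞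
  have hBspan : Spanning ends B := by
    by_contra hnospan
    have : ∃ f ∈ S, ∃ a b : V, ends f = s(a, b) ∧ ¬ Conn ends B a b := by
      by_contra hcon
      push_neg at hcon
      refine hnospan (fun u v => ?_)
      have h := hS u v
      induction h with
      | refl => exact conn_refl B _
      | tail _ hcy ih =>
        obtain ⟨e, he, hh⟩ := hcy
        exact conn_trans ih (hcon e he _ _ hh)
    obtain ⟨f, hfS, a, b, hfe, hnc⟩ := this
    have hfB : f ∉ B := fun hfB => hnc (conn_of_edge hfB hfe)
    have hforest' : IsForest ends (insert f B) := isForest_insert hBforest hfe hnc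
    have hmem : insert f B ∈ 𝒞 := by
      simp only [𝒞, Finset.mem_filter, Finset.mem_powerset]
      exact ⟨Finset.insert_subset hfS hBS, Finset.Subset.trans hFB (Finset.subset_insert f B),
        hforest'⟩
    have := hmax _ hmem
    rw [Finset.card_insert_of_notMem hfB] at this
    omega
  have h1 : comp ends B = 1 := comp_eq_one_of_spanning hBspan
  have h2 := isForest_card hBforest
  have h3 : B.card + 1 = Fintype.card V := by omega
  exact ⟨B, hFB, hBS, h3, hBspan⟩

/-- Structure of a lexicographic comparison: either a common prefix then a strict
difference, or the first list is a proper prefix of the second. -/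
theorem lex_structure {α : Type*} [LinearOrder α] {s t : List α}
    (h : List.Lex (· < ·) s t) :
    (∃ (u : List α) (a b : α) (s₁ t₁ : List α),
        s = u ++ a :: s₁ ∧ t = u ++ b :: t₁ ∧ a < b) ∨
      ∃ u : List α, u ≠ [] ∧ t = s ++ u := by
  induction h with
  | nil => exact Or.inr ⟨_ :: _, List.cons_ne_nil _ _, rfl⟩
  | @rel a l₁ b l₂ hab => exact Or.inl ⟨[], a, b, l₁, l₂, rfl, rfl, hab⟩
  | @cons a l₁ l₂ h ih =>
    rcases ih with ⟨u, a', b', s₁, t₁, h1, h2, h3⟩ | ⟨u, hu, h1⟩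
    · exact Or.inl ⟨a :: u, a', b', s₁, t₁, by rw [h1]; rfl, by rw [h2]; rfl, h3⟩
    · exact Or.inr ⟨u, hu, by rw [h1]; rfl⟩

theorem sum_map_sort {m : ℕ} (A : Finset (Fin m)) (g : Fin m → ℝ) :
    ∑ j ∈ A, g j = ((A.sort (· ≤ ·)).map g).sum := by
  have h1 : ∑ j ∈ A, g j = (Multiset.map g A.val).sum := rfl
  rw [h1, ← Finset.sort_eq A (· ≤ ·), Multiset.map_coe, Multiset.sum_coe]

theorem list_sum_le {m : ℕ} (g : Fin m → ℝ) (l₁ : List (Fin m)) :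
    ∀ l₂ : List (Fin m), l₁.length = l₂.length →
      (∀ (k : ℕ) (hk : k < l₁.length) (hk' : k < l₂.length),
        g (l₁.get ⟨k, hk⟩) ≤ g (l₂.get ⟨k, hk'⟩)) →
      (l₁.map g).sum ≤ (l₂.map g).sum := by
  induction l₁ with
  | nil =>
    intro l₂ hlen _
    cases l₂ with
    | nil => simp
    | cons b l₂ => simp at hlen
  | cons a l₁ ih =>
    intro l₂ hlen h
    cases l₂ with
    | nil => simp at hlen
    | cons b l₂ =>
      simp only [List.map_cons, List.sum_cons]
      have hhead : g a ≤ g b := h 0 (by simp) (by simp)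
      have htail : (l₁.map g).sum ≤ (l₂.map g).sum := by
        refine ih l₂ (by simpa using hlen) (fun k hk hk' => ?_)
        exact h (k + 1) (by simpa using Nat.succ_lt_succ hk)
          (by simpa using Nat.succ_lt_succ hk')
      linarith

end RowGradedAux


open RowGradedAux

/-- If `Q` is row graded and `T⁰` is the lexicographically smallest spanning tree, then `T⁰`
simultaneously minimizes every row-wise linear objective `∑_{j∈T} q i j` over all
spanning trees `T`. -/
theorem row_graded_lex_tree_solves_all_rows {V : Type*} [Fintype V] {m : ℕ}
    (ends : Fin m → Sym2 V) (Q : Fin m → Fin m → ℝ)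
    (hgrad : ∀ i, Monotone (Q i))
    (T0 : Finset (Fin m)) (hT0 : IsSpanningTree ends T0)
    (hlex : ∀ T, IsSpanningTree ends T → T = T0 ∨
      List.Lex (· < ·) (T0.sort (· ≤ ·)) (T.sort (· ≤ ·))) :
    ∀ i : Fin m, ∀ T, IsSpanningTree ends T →
      ∑ j ∈ T0, Q i j ≤ ∑ j ∈ T, Q i j := by
  classical
  intro i T hT
  have hne : Nonempty V := Fintype.card_pos_iff.1 (by have := hT0.1; omega)
  set s := T0.sort (· ≤ ·) with hs
  set t := T.sort (· ≤ ·) with ht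
  have hslen : s.length = T0.card := Finset.length_sort _
  have htlen : t.length = T.card := Finset.length_sort _
  have hcard : T0.card = T.card := by have h1 := hT0.1; have h2 := hT.1; omega
  have hT0forest : IsForest ends T0 := isForest_of_isSpanningTree hT0
  have hTforest : IsForest ends T := isForest_of_isSpanningTree hT
  -- pointwise domination of sorted lists
  have hdom : ∀ (k : ℕ) (hk : k < s.length) (hk' : k < t.length),
      s.get ⟨k, hk⟩ ≤ t.get ⟨k, hk'⟩ := by
    intro k hk hk'
    by_contra hgt
    push_neg at hgt
    set x := t.get ⟨k, hk'⟩ with hx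
    set I := T0.filter (· ≤ x) with hI
    set J := T.filter (· ≤ x) with hJ
    have hspair := List.pairwise_iff_get.1 (Finset.pairwise_sort T0 (· ≤ ·))
    have htpair := List.pairwise_iff_get.1 (Finset.pairwise_sort T (· ≤ ·))
    have hjlt : ∀ j : Fin (k + 1), j.1 < t.length :=
      fun j => Nat.lt_of_le_of_lt (Nat.lt_succ_iff.mp j.2) hk'
    have hjlt' : ∀ j : Fin k, j.1 < s.length := fun j => Nat.lt_trans j.2 hk
    -- J has at least k+1 elements
    have hJcard : k + 1 ≤ J.card := by
      have hmaps : ∀ j : Fin (k + 1), t.get ⟨j.1, hjlt j⟩ ∈ J := by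
        intro j
        refine Finset.mem_filter.2 ⟨(Finset.mem_sort (· ≤ ·)).1 (List.get_mem t _), ?_⟩
        rcases lt_or_eq_of_le (Nat.lt_succ_iff.1 j.2) with hjk | hjk
        · exact htpair ⟨j.1, hjlt j⟩ ⟨k, hk'⟩ (by exact hjk)
        · have heq : (⟨j.1, hjlt j⟩ : Fin t.length) = ⟨k, hk'⟩ := Fin.ext hjk
          rw [heq]
      have hinj : Set.InjOn (fun j : Fin (k + 1) => t.get ⟨j.1, hjlt j⟩)
          ↑(Finset.univ : Finset (Fin (k + 1))) := by
        intro j1 _ j2 _ h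
        have hgetinj := List.nodup_iff_injective_get.1 (Finset.sort_nodup T (· ≤ ·))
        have h5 := hgetinj h
        have h6 : j1.1 = j2.1 := by
          have := congrArg Fin.val h5
          simpa using this
        exact Fin.ext h6
      have := Finset.card_le_card_of_injOn _ (fun j _ => hmaps j) hinj
      simpa using this
    -- I has at most k elements
    have hIcard : I.card ≤ k := by
      have hsub : I ⊆ (Finset.univ : Finset (Fin k)).image
          (fun j : Fin k => s.get ⟨j.1, hjlt' j⟩) := by
        intro a ha
        obtain ⟨haT0, hax⟩ := Finset.mem_filter.1 ha
        have has : a ∈ s := (Finset.mem_sort (· ≤ ·)).2 haT0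
        obtain ⟨j, hj⟩ := List.mem_iff_get.1 has
        have hjk : j.1 < k := by
          by_contra hjge
          push_neg at hjge
          have hge : s.get ⟨k, hk⟩ ≤ s.get j := by
            rcases lt_or_eq_of_le hjge with h | h
            · exact hspair ⟨k, hk⟩ j h
            · have : (⟨k, hk⟩ : Fin s.length) = j := Fin.ext h
              rw [this]
          rw [hj] at hge
          exact absurd (lt_of_le_of_lt (le_trans hge hax) hgt) (lt_irrefl _)
        refine Finset.mem_image.2 ⟨⟨j.1, hjk⟩, Finset.mem_univ _, ?_⟩
        rw [← hj]
      calc I.card ≤ _ := Finset.card_le_card hsub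
        _ ≤ (Finset.univ : Finset (Fin k)).card := Finset.card_image_le
        _ = k := by simp
    -- forests
    have hIforest : IsForest ends I := isForest_subset (Finset.filter_subset _ _) hT0forest
    have hJforest : IsForest ends J := isForest_subset (Finset.filter_subset _ _) hTforest
    obtain ⟨f, hfJ, hfI, a, b, hfe, hnc⟩ := forest_augment hIforest hJforest (by omega)
    obtain ⟨hfT, hfx⟩ := Finset.mem_filter.1 hfJ
    have hfT0 : f ∉ T0 := fun h => hfI (Finset.mem_filter.2 ⟨h, hfx⟩)
    have hS'span : Spanning ends (insert f T0) :=
      fun u v => conn_mono (Finset.subset_insert f T0) (hT0.2 u v)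
    have hsub' : insert f I ⊆ insert f T0 :=
      Finset.insert_subset_insert f (Finset.filter_subset _ _)
    have hforest' : IsForest ends (insert f I) := isForest_insert hIforest hfe hnc
    obtain ⟨B, hFB, hBS', hBtree⟩ := exists_spanning_tree_between hS'span hsub' hforest'
    have hfB : f ∈ B := hFB (Finset.mem_insert_self f I)
    have hIB : I ⊆ B := fun y hy => hFB (Finset.mem_insert_of_mem hy)
    have hBne : B ≠ T0 := fun h => hfT0 (h ▸ hfB)
    have hlexB := (hlex B hBtree).resolve_left hBne
    -- analyze the lexicographic comparison
    set tB := B.sort (· ≤ ·) with htB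
    have htBlen : tB.length = s.length := by
      rw [Finset.length_sort, Finset.length_sort]
      have h1 := hBtree.1
      have h2 := hT0.1
      omega
    rcases lex_structure hlexB with ⟨u, a', b', s₁, t₁, h1, h2, h3⟩ | ⟨u, hu, h1⟩
    · -- common prefix u, then a' < b'
      have hsnodup : s.Nodup := Finset.sort_nodup T0 (· ≤ ·)
      have htBnodup : tB.Nodup := Finset.sort_nodup B (· ≤ ·)
      have htBsorted : tB.Pairwise (· ≤ ·) := Finset.pairwise_sort B (· ≤ ·)
      have ha'T0 : a' ∈ T0 := (Finset.mem_sort (· ≤ ·)).1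
        (by rw [← hs, h1]; exact List.mem_append_right u (List.mem_cons_self))
      -- elements of t₁ are strictly greater than b'
      have ht₁gt : ∀ y ∈ t₁, b' < y := by
        intro y hy
        rw [h2] at htBsorted htBnodup
        have hle : b' ≤ y := (List.pairwise_cons.1 (List.pairwise_append.1 htBsorted).2.1).1 y hy
        have hne' : b' ≠ y := by
          intro h
          exact (List.nodup_cons.1 (List.nodup_append.1 htBnodup).2.1).1 (h ▸ hy)
        exact lt_of_le_of_ne hle hne'
      -- a' is not in B
      have ha'B : a' ∉ B := by
        intro hmem
        have : a' ∈ tB := (Finset.mem_sort (· ≤ ·)).2 hmem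
        rw [htB, ← htB, h2] at this
        rcases List.mem_append.1 this with h | h
        · rw [h1] at hsnodup
          exact (List.disjoint_of_nodup_append hsnodup) h (List.mem_cons_self)
        · rcases List.mem_cons.1 h with h | h
          · exact absurd (h ▸ h3) (lt_irrefl _)
          · exact absurd (lt_trans h3 (ht₁gt a' h)) (lt_irrefl _)
      have ha'x : x < a' := by
        by_contra hle
        push_neg at hle
        exact ha'B (hIB (Finset.mem_filter.2 ⟨ha'T0, hle⟩))
      have hfb' : f < b' := lt_trans (lt_of_le_of_lt hfx ha'x) h3
      -- f must lie in the common prefix, hence in T0: contradiction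
      have hftB : f ∈ tB := (Finset.mem_sort (· ≤ ·)).2 hfB
      rw [htB, ← htB, h2] at hftB
      rcases List.mem_append.1 hftB with h | h
      · have : f ∈ s := by rw [h1]; exact List.mem_append_left _ h
        exact hfT0 ((Finset.mem_sort (· ≤ ·)).1 this)
      · rcases List.mem_cons.1 h with h | h
        · exact absurd (h ▸ hfb') (lt_irrefl _)
        · exact absurd (lt_trans hfb' (ht₁gt f h)) (lt_irrefl _)
    · -- tB a proper extension of s: impossible since lengths agree
      have := congrArg List.length h1
      rw [List.length_append, htBlen] at this
      have : u.length = 0 := by omega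
      exact hu (List.length_eq_zero_iff.1 this)
  -- conclude the sum inequality
  rw [sum_map_sort T0 (Q i), sum_map_sort T (Q i), ← hs, ← ht]
  exact list_sum_le (Q i) s t (by omega) (fun k hk hk' => hgrad i (hdom k hk hk'))
end
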